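/- arXiv:1111.0460 — 4 statements merged into one kernel-verified Lean document; each statement's English description precedes it below -/
import Mathlib

section
/- Let B be a quasi-greedy basis with quasi-greedy constant K in a real Banach space X. Then for every finite set Γ of indices and every family of real numbers (a_k)_{k∈Γ}, one has (1/(4K²))·(min_{k∈Γ}|a_k|)·‖Σ_{k∈Γ} e_k‖ ≤ ‖Σ_{k∈Γ} a_k e_k‖ ≤ 2K·(max_{k∈Γ}|a_k|)·‖Σ_{k∈Γ} e_k‖. -/
open Finset Filter

/-- A (seminormalized Schauder) basis of a real normed space, given by the basis
vectors `e k` together with the coefficient functionals `coeff k`. -/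
structure QGBasis (X : Type*) [NormedAddCommGroup X] [NormedSpace ℝ X] where
  e : ℕ → X
  coeff : ℕ → X → ℝ
  coeff_add : ∀ k x y, coeff k (x + y) = coeff k x + coeff k y
  coeff_smul : ∀ (k : ℕ) (c : ℝ) (x : X), coeff k (c • x) = c * coeff k x
  coeff_e : ∀ j k, coeff j (e k) = if j = k then 1 else 0
  expansion : ∀ x : X,
    Tendsto (fun N => ∑ k ∈ Finset.range N, coeff k x • e k) atTop (nhds x)
  c_norm : ℝ
  C_norm : ℝ
  c_norm_pos : 0 < c_norm
  norm_e_ge : ∀ k, c_norm ≤ ‖e k‖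
  norm_e_le : ∀ k, ‖e k‖ ≤ C_norm

namespace QGBasis

variable {X : Type*} [NormedAddCommGroup X] [NormedSpace ℝ X] (B : QGBasis X)

/-- `π` enumerates the coefficients of `x` in decreasing order of modulus;
position `k` (zero-based) carries the `(k+1)`-st largest coefficient. -/
def IsGreedyPerm (x : X) (π : ℕ → ℕ) : Prop :=
  Function.Bijective π ∧ ∀ k, |B.coeff (π (k + 1)) x| ≤ |B.coeff (π k) x|

/-- The thresholding greedy approximation of order `N` associated to the
greedy enumeration `π`. -/
def G (π : ℕ → ℕ) (N : ℕ) (x : X) : X :=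
  ∑ k ∈ Finset.range N, B.coeff (π k) x • B.e (π k)

/-- `B` is quasi-greedy with constant `K`. -/
def QuasiGreedyWith (K : ℝ) : Prop :=
  ∀ (x : X) (π : ℕ → ℕ), B.IsGreedyPerm x π → ∀ N,
    ‖B.G π N x‖ ≤ K * ‖x‖ ∧ ‖x - B.G π N x‖ ≤ K * ‖x‖

/-- Coordinate projection onto the index set `Γ`. -/
def S (Γ : Finset ℕ) (x : X) : X := ∑ k ∈ Γ, B.coeff k x • B.e k

/-- Right democracy function. -/
noncomputable def hr (N : ℕ) : ℝ :=
  sSup {r | ∃ Γ : Finset ℕ, Γ.card = N ∧ r = ‖∑ k ∈ Γ, B.e k‖}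

/-- Left democracy function. -/
noncomputable def hl (N : ℕ) : ℝ :=
  sInf {r | ∃ Γ : Finset ℕ, Γ.card = N ∧ r = ‖∑ k ∈ Γ, B.e k‖}

/-- The democracy ratio `μ(N) = sup_{1 ≤ k ≤ N} h_r(k)/h_l(k)`. -/
noncomputable def mu (N : ℕ) : ℝ :=
  sSup {r | ∃ k, 1 ≤ k ∧ k ≤ N ∧ r = B.hr k / B.hl k}

/-- Best `N`-term approximation error. -/
noncomputable def sigma (N : ℕ) (x : X) : ℝ :=
  sInf {r | ∃ (Γ : Finset ℕ) (b : ℕ → ℝ),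
    Γ.card ≤ N ∧ r = ‖x - ∑ k ∈ Γ, b k • B.e k‖}

/-- `Γ` is a greedy set for `x`: every coefficient inside dominates every
coefficient outside. -/
def IsGreedySet (x : X) (Γ : Finset ℕ) : Prop :=
  ∀ j ∈ Γ, ∀ i ∉ Γ, |B.coeff i x| ≤ |B.coeff j x|

end QGBasis

section Aux

variable {X : Type*} [NormedAddCommGroup X] [NormedSpace ℝ X] (B : QGBasis X)

lemma coeff_zero (k : ℕ) : B.coeff k 0 = 0 := by
  have := B.coeff_add k 0 0
  simpa using this.symm

lemma coeff_finsum (Γ : Finset ℕ) (a : ℕ → ℝ) (j : ℕ) :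
    B.coeff j (∑ k ∈ Γ, a k • B.e k) = if j ∈ Γ then a j else 0 := by
  classical
  induction Γ using Finset.induction with
  | empty => simpa using coeff_zero B j
  | insert _ _ hnotmem =>
    rename_i i s ih
    rw [Finset.sum_insert hnotmem, B.coeff_add, B.coeff_smul, B.coeff_e, ih]
    by_cases h : j = i
    · subst h
      simp [hnotmem]
    · simp [h, Ne.symm h]

lemma K_ge_one (K : ℝ) (hK : B.QuasiGreedyWith K) : 1 ≤ K := by
  have hperm : B.IsGreedyPerm (B.e 0) id := by
    refine ⟨Function.bijective_id, fun k => ?_⟩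
    simp only [id_eq, B.coeff_e]
    rcases Nat.eq_zero_or_pos k with hk | hk
    · subst hk; simp
    · have h1 : k ≠ 0 := hk.ne'
      have h2 : k + 1 ≠ 0 := by omega
      simp [h1, h2]
  have := (hK (B.e 0) id hperm 1).1
  have hG : B.G id 1 (B.e 0) = B.e 0 := by
    simp [QGBasis.G, B.coeff_e]
  rw [hG] at this
  have hpos : 0 < ‖B.e 0‖ := lt_of_lt_of_le B.c_norm_pos (B.norm_e_ge 0)
  nlinarith

lemma list_sum_range (f : ℕ → X) (m : List ℕ) :
    ∑ i ∈ Finset.range m.length, f (m.getD i 0) = (m.map f).sum := by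
  induction m with
  | nil => simp
  | cons b t ih =>
    rw [List.length_cons, Finset.sum_range_succ']
    simp only [List.getD_cons_succ, List.getD_cons_zero, List.map_cons, List.sum_cons, ih]
    exact add_comm _ _

set_option linter.unusedSectionVars false

lemma core (K : ℝ) (hK : B.QuasiGreedyWith K) (a : ℕ → ℝ) (l : List ℕ) (hnd : l.Nodup)
    (hchain : ∀ i, i + 1 < l.length → |a (l.getD (i+1) 0)| ≤ |a (l.getD i 0)|)
    (N : ℕ) (hN : N ≤ l.length) :
    ‖∑ i ∈ Finset.range N, a (l.getD i 0) • B.e (l.getD i 0)‖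
        ≤ K * ‖∑ k ∈ l.toFinset, a k • B.e k‖ ∧
    ‖(∑ k ∈ l.toFinset, a k • B.e k) - ∑ i ∈ Finset.range N, a (l.getD i 0) • B.e (l.getD i 0)‖
        ≤ K * ‖∑ k ∈ l.toFinset, a k • B.e k‖ := by
  classical
  set x := ∑ k ∈ l.toFinset, a k • B.e k with hx
  have hcoeff : ∀ j, B.coeff j x = if j ∈ l.toFinset then a j else 0 := fun j =>
    coeff_finsum B l.toFinset a j
  set n := l.length with hn
  set p : ℕ → Prop := fun m => m ∉ l with hp
  have hpinf : (setOf p).Infinite := by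
    have hset : setOf p = ((l.toFinset : Set ℕ))ᶜ := by
      ext m; simp [hp]; exact Iff.rfl
    rw [hset]
    exact (l.toFinset.finite_toSet).infinite_compl
  set π : ℕ → ℕ := fun k => if k < n then l.getD k 0 else Nat.nth p (k - n) with hπ
  have hπ_lt : ∀ k, k < n → π k = l.getD k 0 := fun k hk => if_pos hk
  have hπ_ge : ∀ k, n ≤ k → π k = Nat.nth p (k - n) := fun k hk => if_neg (by omega)
  have hmem : ∀ k, k < n → l.getD k 0 ∈ l := fun k h => by
    rw [List.getD_eq_getElem l 0 h]; exact List.getElem_mem _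
  have hnotmem : ∀ k, n ≤ k → π k ∉ l := fun k hk => by
    rw [hπ_ge k hk]; exact Nat.nth_mem_of_infinite hpinf _
  have hinj : Function.Injective π := by
    intro k₁ k₂ h
    rcases lt_or_ge k₁ n with h1 | h1 <;> rcases lt_or_ge k₂ n with h2 | h2
    · rw [hπ_lt k₁ h1, hπ_lt k₂ h2, List.getD_eq_getElem l 0 h1,
        List.getD_eq_getElem l 0 h2] at h
      exact (hnd.getElem_inj_iff).1 h
    · exfalso
      apply hnotmem k₂ h2
      rw [← h, hπ_lt k₁ h1]
      exact hmem k₁ h1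
    · exfalso
      apply hnotmem k₁ h1
      rw [h, hπ_lt k₂ h2]
      exact hmem k₂ h2
    · have := Nat.nth_injective hpinf (show Nat.nth p (k₁-n) = Nat.nth p (k₂-n) by rw [← hπ_ge k₁ h1, ← hπ_ge k₂ h2]; exact h)
      omega
  have hsurj : Function.Surjective π := by
    intro m
    by_cases hm : m ∈ l
    · obtain ⟨i, hi, him⟩ := List.getElem_of_mem hm
      exact ⟨i, by rw [hπ_lt i hi, List.getD_eq_getElem l 0 hi, him]⟩
    · refine ⟨n + Nat.count p m, ?_⟩
      rw [hπ_ge _ (Nat.le_add_right _ _), Nat.add_sub_cancel_left]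
      exact Nat.nth_count hm
  have hmono : ∀ k, |B.coeff (π (k+1)) x| ≤ |B.coeff (π k) x| := by
    intro k
    rcases lt_or_ge (k+1) n with h1 | h1
    · have hk : k < n := by omega
      rw [hπ_lt _ h1, hπ_lt _ hk, hcoeff, hcoeff,
        if_pos (List.mem_toFinset.2 (hmem _ h1)), if_pos (List.mem_toFinset.2 (hmem _ hk))]
      exact hchain k h1
    · have h2 : π (k+1) ∉ l := hnotmem _ h1
      rw [hcoeff (π (k+1)), if_neg (fun hh => h2 (List.mem_toFinset.1 hh))]
      simp only [abs_zero]
      exact abs_nonneg _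
  have hg := hK x π ⟨⟨hinj, hsurj⟩, hmono⟩ N
  have hGeq : B.G π N x = ∑ i ∈ Finset.range N, a (l.getD i 0) • B.e (l.getD i 0) := by
    unfold QGBasis.G
    apply Finset.sum_congr rfl
    intro i hi
    have hi' : i < n := lt_of_lt_of_le (Finset.mem_range.1 hi) hN
    rw [hπ_lt i hi', hcoeff, if_pos (List.mem_toFinset.2 (hmem _ hi'))]
  rw [hGeq] at hg
  exact hg

lemma lemSign (K : ℝ) (hK : B.QuasiGreedyWith K) (Γ : Finset ℕ) (ε η : ℕ → ℝ)
    (hε : ∀ k ∈ Γ, |ε k| = 1) (hη : ∀ k ∈ Γ, η k = ε k ∨ η k = -ε k) :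
    ‖∑ k ∈ Γ, η k • B.e k‖ ≤ 2 * K * ‖∑ k ∈ Γ, ε k • B.e k‖ := by
  classical
  set A := Γ.filter (fun k => η k = ε k) with hA
  have hAΓ : A ⊆ Γ := Finset.filter_subset _ _
  set l := A.toList ++ (Γ \ A).toList with hl
  have hnd : l.Nodup := by
    refine List.Nodup.append (Finset.nodup_toList A) (Finset.nodup_toList _) ?_
    intro y hy1 hy2
    have h1 : y ∈ A := Finset.mem_toList.1 hy1
    have h2 : y ∈ Γ \ A := Finset.mem_toList.1 hy2
    exact absurd h1 (Finset.mem_sdiff.1 h2).2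
  have hlto : l.toFinset = Γ := by
    ext k
    simp only [hl, List.toFinset_append, Finset.mem_union, List.mem_toFinset,
      Finset.mem_toList, Finset.mem_sdiff]
    constructor
    · rintro (h | h)
      · exact hAΓ h
      · exact h.1
    · intro h
      by_cases hk : k ∈ A
      · exact Or.inl hk
      · exact Or.inr ⟨h, hk⟩
  have hmemΓ : ∀ i, i < l.length → l.getD i 0 ∈ Γ := by
    intro i h
    have : l.getD i 0 ∈ l := by
      rw [List.getD_eq_getElem l 0 h]; exact List.getElem_mem _
    rw [← hlto]
    exact List.mem_toFinset.2 this
  have hchain : ∀ i, i + 1 < l.length → |ε (l.getD (i+1) 0)| ≤ |ε (l.getD i 0)| := by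
    intro i h
    rw [hε _ (hmemΓ _ h), hε _ (hmemΓ _ (by omega))]
  have hlenA : A.toList.length = A.card := Finset.length_toList A
  have hlen : A.card ≤ l.length := by
    rw [hl, List.length_append, hlenA]
    omega
  have hc := core B K hK ε l hnd hchain A.card hlen
  rw [hlto] at hc
  have hS : ∑ i ∈ Finset.range A.card, ε (l.getD i 0) • B.e (l.getD i 0)
      = ∑ k ∈ A, ε k • B.e k := by
    rw [Finset.sum_congr rfl (fun i hi => by
      rw [hl, List.getD_append _ _ _ _ (by rw [hlenA]; exact Finset.mem_range.1 hi)])]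
    rw [← hlenA, list_sum_range (fun k => ε k • B.e k) A.toList,
      Finset.sum_map_toList]
  rw [hS] at hc
  set x := ∑ k ∈ Γ, ε k • B.e k
  set S := ∑ k ∈ A, ε k • B.e k
  set T := ∑ k ∈ Γ \ A, ε k • B.e k with hT
  have hxTS : x = T + S := (Finset.sum_sdiff hAΓ).symm
  have hηeq : ∑ k ∈ Γ, η k • B.e k = S - T := by
    rw [← Finset.sum_sdiff hAΓ]
    have e1 : ∑ k ∈ Γ \ A, η k • B.e k = -T := by
      rw [hT, ← Finset.sum_neg_distrib]
      refine Finset.sum_congr rfl (fun k hk => ?_)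
      have hk' := Finset.mem_sdiff.1 hk
      have : η k = -ε k := by
        rcases hη k hk'.1 with h | h
        · exact absurd (Finset.mem_filter.2 ⟨hk'.1, h⟩) hk'.2
        · exact h
      rw [this, neg_smul]
    have e2 : ∑ k ∈ A, η k • B.e k = S := by
      refine Finset.sum_congr rfl (fun k hk => ?_)
      rw [(Finset.mem_filter.1 hk).2]
    rw [e1, e2]
    abel
  rw [hηeq]
  have : S - T = S - (x - S) := by rw [hxTS]; abel
  rw [this]
  calc ‖S - (x - S)‖ ≤ ‖S‖ + ‖x - S‖ := norm_sub_le _ _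
    _ ≤ K * ‖x‖ + K * ‖x‖ := add_le_add hc.1 hc.2
    _ = 2 * K * ‖x‖ := by ring


lemma cube (K : ℝ) (hK : B.QuasiGreedyWith K) (Γ : Finset ℕ) (a : ℕ → ℝ)
    (ha : ∀ k ∈ Γ, |a k| ≤ 1) :
    ‖∑ k ∈ Γ, a k • B.e k‖ ≤ 2 * K * ‖∑ k ∈ Γ, B.e k‖ := by
  classical
  have hones : ∑ k ∈ Γ, B.e k = ∑ k ∈ Γ, (1:ℝ) • B.e k := by simp
  have key : ∀ Δ : Finset ℕ, ∀ b : ℕ → ℝ, (∀ k ∈ Γ, |b k| ≤ 1) →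
      (∀ k ∈ Γ, k ∉ Δ → b k = 1 ∨ b k = -1) →
      ‖∑ k ∈ Γ, b k • B.e k‖ ≤ 2 * K * ‖∑ k ∈ Γ, B.e k‖ := by
    intro Δ
    induction Δ using Finset.induction with
    | empty =>
      intro b hb hsign
      have h := lemSign B K hK Γ (fun _ => 1) b (by simp) (fun k hk => by
        rcases hsign k hk (Finset.notMem_empty k) with h | h
        · exact Or.inl h
        · exact Or.inr (by simp [h]))
      rw [hones]
      simpa using h
    | insert _ _ hnot =>
      rename_i j Δ' ih
      intro b hb hsign
      by_cases hj : j ∈ Γ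
      · have hbj := abs_le.1 (hb j hj)
        set t := (1 + b j)/2 with ht
        have ht0 : 0 ≤ t := by rw [ht]; linarith [hbj.1]
        have ht1 : t ≤ 1 := by rw [ht]; linarith [hbj.2]
        set bp := Function.update b j 1 with hbp
        set bm := Function.update b j (-1) with hbm
        have hup : ∀ k, k ≠ j → bp k = b k ∧ bm k = b k := fun k hk =>
          ⟨Function.update_of_ne hk _ _, Function.update_of_ne hk _ _⟩
        have ihp := ih bp (fun k hk => by
            by_cases hkj : k = j
            · subst hkj; rw [hbp, Function.update_self]; norm_num
            · rw [(hup k hkj).1]; exact hb k hk)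
          (fun k hk hkΔ => by
            by_cases hkj : k = j
            · subst hkj; rw [hbp, Function.update_self]; exact Or.inl rfl
            · rw [(hup k hkj).1]
              exact hsign k hk (by simp [Finset.mem_insert, hkj, hkΔ]))
        have ihm := ih bm (fun k hk => by
            by_cases hkj : k = j
            · subst hkj; rw [hbm, Function.update_self]; norm_num
            · rw [(hup k hkj).2]; exact hb k hk)
          (fun k hk hkΔ => by
            by_cases hkj : k = j
            · subst hkj; rw [hbm, Function.update_self]; exact Or.inr rfl
            · rw [(hup k hkj).2]
              exact hsign k hk (by simp [Finset.mem_insert, hkj, hkΔ]))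
        have hdecomp : ∑ k ∈ Γ, b k • B.e k
            = t • (∑ k ∈ Γ, bp k • B.e k) + (1-t) • (∑ k ∈ Γ, bm k • B.e k) := by
          rw [Finset.smul_sum, Finset.smul_sum, ← Finset.sum_add_distrib]
          refine Finset.sum_congr rfl (fun k hk => ?_)
          rw [smul_smul, smul_smul, ← add_smul]
          by_cases hkj : k = j
          · subst hkj
            rw [hbp, hbm, Function.update_self, Function.update_self]
            congr 1
            rw [ht]; ring
          · rw [(hup k hkj).1, (hup k hkj).2]
            congr 1
            ring
        rw [hdecomp]
        calc ‖t • (∑ k ∈ Γ, bp k • B.e k) + (1-t) • (∑ k ∈ Γ, bm k • B.e k)‖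
            ≤ ‖t • (∑ k ∈ Γ, bp k • B.e k)‖ + ‖(1-t) • (∑ k ∈ Γ, bm k • B.e k)‖ :=
              norm_add_le _ _
          _ = t * ‖∑ k ∈ Γ, bp k • B.e k‖ + (1-t) * ‖∑ k ∈ Γ, bm k • B.e k‖ := by
              rw [norm_smul, norm_smul, Real.norm_eq_abs, Real.norm_eq_abs,
                abs_of_nonneg ht0, abs_of_nonneg (by linarith : (0:ℝ) ≤ 1 - t)]
          _ ≤ t * (2 * K * ‖∑ k ∈ Γ, B.e k‖) + (1-t) * (2 * K * ‖∑ k ∈ Γ, B.e k‖) :=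
              add_le_add (mul_le_mul_of_nonneg_left ihp ht0)
                (mul_le_mul_of_nonneg_left ihm (by linarith))
          _ = 2 * K * ‖∑ k ∈ Γ, B.e k‖ := by ring
      · refine ih b hb (fun k hk hkΔ => hsign k hk ?_)
        intro hmem
        rcases Finset.mem_insert.1 hmem with rfl | h
        · exact hj hk
        · exact hkΔ h
  exact key Γ a ha (fun k hk hkn => absurd hk hkn)


lemma trunc (K : ℝ) (hK : B.QuasiGreedyWith K) (Γ : Finset ℕ) (hΓ : Γ.Nonempty)
    (a : ℕ → ℝ) (m : ℝ) (hm : 0 < m) (hma : ∀ k ∈ Γ, m ≤ |a k|) :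
    m * ‖∑ k ∈ Γ, B.e k‖ ≤ 4 * K^2 * ‖∑ k ∈ Γ, a k • B.e k‖ := by
  classical
  have hK1 : 1 ≤ K := K_ge_one B K hK
  set x := ∑ k ∈ Γ, a k • B.e k with hx
  set ε : ℕ → ℝ := fun k => if 0 ≤ a k then 1 else -1 with hε
  have hεabs : ∀ k ∈ Γ, |ε k| = 1 := by
    intro k _
    rw [hε]
    by_cases h : 0 ≤ a k <;> simp [h]
  set r : ℕ → ℕ → Prop := fun i j => |a j| ≤ |a i| with hr
  letI : DecidableRel r := fun i j => Classical.dec _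
  haveI : Std.Total r := ⟨fun i j => le_total _ _⟩
  haveI : IsTrans ℕ r := ⟨fun i j k h1 h2 => le_trans h2 h1⟩
  set l : List ℕ := List.insertionSort r Γ.toList with hl
  have hperm : List.Perm l Γ.toList := List.perm_insertionSort r Γ.toList
  have hnd : l.Nodup := hperm.nodup_iff.2 (Finset.nodup_toList Γ)
  have hlto : l.toFinset = Γ := by
    ext k
    rw [List.mem_toFinset, hperm.mem_iff, Finset.mem_toList]
  have hlen : l.length = Γ.card := by rw [hperm.length_eq, Finset.length_toList]
  set n := l.length with hn
  have hn1 : 1 ≤ n := by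
    rw [hlen]
    exact Finset.card_pos.2 hΓ
  have hmemΓ : ∀ i, i < n → l.getD i 0 ∈ Γ := by
    intro i h
    have : l.getD i 0 ∈ l := by
      rw [List.getD_eq_getElem l 0 h]; exact List.getElem_mem _
    rw [← hlto]; exact List.mem_toFinset.2 this
  have hsorted : List.Pairwise r l := List.pairwise_insertionSort r Γ.toList
  have hchain : ∀ i, i + 1 < n → |a (l.getD (i+1) 0)| ≤ |a (l.getD i 0)| := by
    intro i h
    have h' : i < n := by omega
    have := (List.pairwise_iff_getElem.1 hsorted) i (i+1) h' h (by omega)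
    rwa [List.getD_eq_getElem l 0 h', List.getD_eq_getElem l 0 h]
  set g : ℕ → X := fun i => a (l.getD i 0) • B.e (l.getD i 0) with hg
  have hS : ∀ N, N ≤ n → ‖∑ i ∈ Finset.range N, g i‖ ≤ K * ‖x‖ := by
    intro N hN
    have := (core B K hK a l hnd hchain N hN).1
    rwa [hlto, ← hx] at this
  set c : ℕ → ℝ := fun i => |a (l.getD i 0)|⁻¹ with hc
  have hcpos : ∀ i, i < n → 0 < c i := by
    intro i h
    exact inv_pos.2 (lt_of_lt_of_le hm (hma _ (hmemΓ i h)))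
  have hcmono : ∀ i, i + 1 < n → c i ≤ c (i+1) := by
    intro i h
    exact inv_anti₀ (lt_of_lt_of_le hm (hma _ (hmemΓ _ h))) (hchain i h)
  have hcm : m * c (n-1) ≤ 1 := by
    have h1 : m ≤ |a (l.getD (n-1) 0)| := hma _ (hmemΓ _ (by omega))
    have h2 : 0 < |a (l.getD (n-1) 0)| := lt_of_lt_of_le hm h1
    rw [hc]
    rw [mul_inv_le_iff₀ h2, one_mul]
    exact h1
  -- the signed sum equals the Abel sum
  have hsign_eq : ∑ k ∈ Γ, ε k • B.e k = ∑ i ∈ Finset.range n, c i • g i := by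
    have h1 : ∀ i ∈ Finset.range n, c i • g i = ε (l.getD i 0) • B.e (l.getD i 0) := by
      intro i hi
      have hiΓ := hmemΓ i (Finset.mem_range.1 hi)
      have hane : a (l.getD i 0) ≠ 0 := by
        intro h0
        have := hma _ hiΓ
        rw [h0] at this
        simp at this
        linarith
      rw [hg, hc, smul_smul]
      congr 1
      show |a (l.getD i 0)|⁻¹ * a (l.getD i 0) = if 0 ≤ a (l.getD i 0) then 1 else -1
      by_cases h : 0 ≤ a (l.getD i 0)
      · rw [if_pos h, abs_of_nonneg h]
        exact inv_mul_cancel₀ hane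
      · rw [if_neg h, abs_of_neg (lt_of_le_of_ne (le_of_not_ge h) hane)]
        rw [inv_neg, neg_mul, inv_mul_cancel₀ hane]
    rw [Finset.sum_congr rfl h1]
    rw [hn, list_sum_range (fun k => ε k • B.e k) l, ← List.sum_toFinset _ hnd, hlto]
  -- Abel summation bound
  have habel := Finset.sum_range_by_parts c g n
  have hnormabel : ‖∑ i ∈ Finset.range n, c i • g i‖ ≤ 2 * c (n-1) * (K * ‖x‖) := by
    rw [habel]
    have hb1 : ‖c (n-1) • ∑ i ∈ Finset.range n, g i‖ ≤ c (n-1) * (K * ‖x‖) := by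
      rw [norm_smul, Real.norm_eq_abs, abs_of_pos (hcpos _ (by omega))]
      exact mul_le_mul_of_nonneg_left (hS n le_rfl) (le_of_lt (hcpos _ (by omega)))
    have hb2 : ‖∑ i ∈ Finset.range (n-1), (c (i+1) - c i) • ∑ j ∈ Finset.range (i+1), g j‖
        ≤ (c (n-1) - c 0) * (K * ‖x‖) := by
      calc ‖∑ i ∈ Finset.range (n-1), (c (i+1) - c i) • ∑ j ∈ Finset.range (i+1), g j‖
          ≤ ∑ i ∈ Finset.range (n-1), ‖(c (i+1) - c i) • ∑ j ∈ Finset.range (i+1), g j‖ :=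
            norm_sum_le _ _
        _ ≤ ∑ i ∈ Finset.range (n-1), (c (i+1) - c i) * (K * ‖x‖) := by
            refine Finset.sum_le_sum (fun i hi => ?_)
            have hi' : i + 1 < n := by
              have := Finset.mem_range.1 hi
              omega
            rw [norm_smul, Real.norm_eq_abs, abs_of_nonneg (by linarith [hcmono i hi'])]
            exact mul_le_mul_of_nonneg_left (hS (i+1) (by omega))
              (by linarith [hcmono i hi'])
        _ = (c (n-1) - c 0) * (K * ‖x‖) := by
            rw [← Finset.sum_mul, Finset.sum_range_sub c (n-1)]
    calc ‖c (n-1) • (∑ i ∈ Finset.range n, g i)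
          - ∑ i ∈ Finset.range (n-1), (c (i+1) - c i) • ∑ j ∈ Finset.range (i+1), g j‖
        ≤ ‖c (n-1) • ∑ i ∈ Finset.range n, g i‖
          + ‖∑ i ∈ Finset.range (n-1), (c (i+1) - c i) • ∑ j ∈ Finset.range (i+1), g j‖ :=
          norm_sub_le _ _
      _ ≤ c (n-1) * (K * ‖x‖) + (c (n-1) - c 0) * (K * ‖x‖) := add_le_add hb1 hb2
      _ ≤ 2 * c (n-1) * (K * ‖x‖) := by
          have hc0 : 0 < c 0 := hcpos 0 (by omega)
          have hx0 : 0 ≤ K * ‖x‖ := mul_nonneg (by linarith) (norm_nonneg _)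
          nlinarith
  -- step A conclusion
  have hstepA : m * ‖∑ k ∈ Γ, ε k • B.e k‖ ≤ 2 * K * ‖x‖ := by
    rw [hsign_eq]
    have h2 := hnormabel
    have hxn : 0 ≤ K * ‖x‖ := mul_nonneg (by linarith) (norm_nonneg _)
    have hcn : 0 < c (n-1) := hcpos _ (by omega)
    nlinarith [norm_nonneg (∑ i ∈ Finset.range n, c i • g i)]
  -- step B
  have hstepB : ‖∑ k ∈ Γ, B.e k‖ ≤ 2 * K * ‖∑ k ∈ Γ, ε k • B.e k‖ := by
    have h := lemSign B K hK Γ ε (fun _ => 1) hεabs (fun k hk => by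
      rw [hε]
      by_cases h : 0 ≤ a k
      · exact Or.inl (by simp [h])
      · exact Or.inr (by simp [h]))
    simpa using h
  calc m * ‖∑ k ∈ Γ, B.e k‖ ≤ m * (2 * K * ‖∑ k ∈ Γ, ε k • B.e k‖) :=
        mul_le_mul_of_nonneg_left hstepB (le_of_lt hm)
    _ = 2 * K * (m * ‖∑ k ∈ Γ, ε k • B.e k‖) := by ring
    _ ≤ 2 * K * (2 * K * ‖x‖) :=
        mul_le_mul_of_nonneg_left hstepA (by linarith)
    _ = 4 * K^2 * ‖x‖ := by ring

end Aux

/-- the DKKT inequalities for quasi-greedy bases. -/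
theorem stmt0 {X : Type*} [NormedAddCommGroup X] [NormedSpace ℝ X] [CompleteSpace X]
    (B : QGBasis X) (K : ℝ) (hK : B.QuasiGreedyWith K)
    (Γ : Finset ℕ) (hΓ : Γ.Nonempty) (a : ℕ → ℝ) :
    (1 / (4 * K ^ 2)) * (Γ.inf' hΓ fun k => |a k|) * ‖∑ k ∈ Γ, B.e k‖ ≤
        ‖∑ k ∈ Γ, a k • B.e k‖ ∧
    ‖∑ k ∈ Γ, a k • B.e k‖ ≤
        2 * K * (Γ.sup' hΓ fun k => |a k|) * ‖∑ k ∈ Γ, B.e k‖ := by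
  classical
  have hK1 : 1 ≤ K := K_ge_one B K hK
  constructor
  · -- lower estimate
    set m := Γ.inf' hΓ (fun k => |a k|) with hm
    have hm0 : 0 ≤ m := Finset.le_inf' hΓ _ (fun k _ => abs_nonneg _)
    rcases eq_or_lt_of_le hm0 with h0 | h0
    · rw [← h0]
      simp only [mul_zero, zero_mul]
      exact norm_nonneg _
    · have hma : ∀ k ∈ Γ, m ≤ |a k| := fun k hk => Finset.inf'_le _ hk
      have ht := trunc B K hK Γ hΓ a m h0 hma
      have h4 : (0:ℝ) < 4 * K^2 := by nlinarith
      rw [show (1 / (4*K^2)) * m * ‖∑ k ∈ Γ, B.e k‖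
          = (m * ‖∑ k ∈ Γ, B.e k‖) / (4*K^2) by ring, div_le_iff₀ h4]
      nlinarith
  · -- upper estimate
    set Amax := Γ.sup' hΓ (fun k => |a k|) with hA
    obtain ⟨k₀, hk₀⟩ := hΓ
    have hA0 : 0 ≤ Amax := by
      rw [hA]
      exact le_trans (abs_nonneg (a k₀)) (Finset.le_sup' (fun k => |a k|) hk₀)
    rcases eq_or_lt_of_le hA0 with h0 | h0
    · have hz : ∀ k ∈ Γ, a k = 0 := fun k hk =>
        abs_eq_zero.1 (le_antisymm (h0 ▸ Finset.le_sup' (fun k => |a k|) hk) (abs_nonneg _))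
      rw [Finset.sum_congr rfl (fun k hk => by rw [hz k hk, zero_smul])]
      rw [← h0]
      simp
    · have hcube := cube B K hK Γ (fun k => a k / Amax) (fun k hk => by
        rw [abs_div, abs_of_pos h0, div_le_one h0, hA]
        exact Finset.le_sup' (fun k => |a k|) hk)
      have hsum : ∑ k ∈ Γ, (a k / Amax) • B.e k = Amax⁻¹ • ∑ k ∈ Γ, a k • B.e k := by
        rw [Finset.smul_sum]
        refine Finset.sum_congr rfl (fun k hk => ?_)
        rw [smul_smul, div_eq_inv_mul]
      rw [hsum, norm_smul, Real.norm_eq_abs, abs_of_pos (inv_pos.2 h0)] at hcube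
      have h1 := mul_le_mul_of_nonneg_left hcube (le_of_lt h0)
      rw [← mul_assoc, mul_inv_cancel₀ (ne_of_gt h0), one_mul] at h1
      have h2 : Amax * (2 * K * ‖∑ k ∈ Γ, B.e k‖) = 2 * K * Amax * ‖∑ k ∈ Γ, B.e k‖ := by
        ring
      linarith
end

section
/- Let B = {e_k} be a quasi-greedy basis with quasi-greedy constant K in a real Banach space X. Suppose there exist C₁ > 0 and a function η: ℕ → (0,∞) that is increasing and doubling such that ‖Σ_{k∈Γ} e_k‖ ≤ C₁ η(|Γ|) for all finite Γ ⊂ ℕ. Then there is a constant C_η depending only on η such that for every x = Σ_k a_k(x) e_k ∈ X, ‖x‖ ≤ 2K·C_η·Σ_{k=1}^∞ a_k*(x) η(k)/k, where (a_k*(x)) is the decreasing rearrangement of (|a_k(x)|). -/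
open Finset Filter

section Aux

variable {X : Type*} [NormedAddCommGroup X] [NormedSpace ℝ X]

/-- Abel summation identity. -/
private lemma abel_sum (c : ℕ → ℝ) (w : ℕ → X) (N : ℕ) :
    ∑ j ∈ Finset.range N, c j • w j
      = (∑ j ∈ Finset.range N, (c j - c (j+1)) • ∑ m ∈ Finset.range (j+1), w m)
        + c N • ∑ m ∈ Finset.range N, w m := by
  induction N with
  | zero => simp
  | succ n ih =>
    rw [Finset.sum_range_succ, ih,
      Finset.sum_range_succ (fun j => (c j - c (j+1)) • ∑ m ∈ Finset.range (j+1), w m),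
      Finset.sum_range_succ w, sub_smul, smul_add, smul_add]
    abel

/-- The weight comparison lemma coming from doubling. -/
private lemma weight_bound (η : ℕ → ℝ) (hηpos : ∀ k, 1 ≤ k → 0 < η k) (hηmono : Monotone η)
    (D : ℝ) (hηdbl : ∀ k, 1 ≤ k → η (2 * k) ≤ D * η k) (hD : 1 ≤ D)
    (c : ℕ → ℝ) (hc : ∀ j, c (j+1) ≤ c j) (hc0 : ∀ j, 0 ≤ c j) (N : ℕ) :
    ∑ j ∈ Finset.range N, (c j - c (j+1)) * η (j+1)
      ≤ 2 * D * ∑ k ∈ Finset.range N, c k * (η (k+1) / ((k : ℝ)+1)) := by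
  have hD0 : (0:ℝ) < D := lt_of_lt_of_le one_pos hD
  have hμ : ∀ k : ℕ, 0 ≤ η (k+1) / ((k:ℝ)+1) := fun k =>
    div_nonneg (hηpos (k+1) (Nat.le_add_left 1 k)).le (by positivity)
  have hδ : ∀ j : ℕ, 0 ≤ c j - c (j+1) := fun j => sub_nonneg.mpr (hc j)
  -- key averaged doubling estimate
  have key : ∀ j : ℕ, η (j+1) ≤ 2 * D * ∑ k ∈ Finset.Icc (j/2) j, η (k+1) / ((k:ℝ)+1) := by
    intro j
    have hlow : ∀ k ∈ Finset.Icc (j/2) j, η (j+1) / (D * ((j:ℝ)+1)) ≤ η (k+1) / ((k:ℝ)+1) := by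
      intro k hk
      simp only [Finset.mem_Icc] at hk
      have h1 : η (j+1) ≤ D * η (k+1) := by
        have h2 : j + 1 ≤ 2 * (k+1) := by omega
        calc η (j+1) ≤ η (2 * (k+1)) := hηmono h2
          _ ≤ D * η (k+1) := hηdbl (k+1) (Nat.le_add_left 1 k)
      have hk1 : ((k:ℝ)+1) ≤ ((j:ℝ)+1) := by
        have hkj : (k:ℝ) ≤ (j:ℝ) := Nat.cast_le.mpr hk.2
        linarith
      have hkpos : (0:ℝ) < (k:ℝ)+1 := by positivity
      have hjpos : (0:ℝ) < (j:ℝ)+1 := by positivity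
      rw [div_le_div_iff₀ (by positivity) hkpos]
      have hηk : 0 ≤ η (k+1) := (hηpos (k+1) (Nat.le_add_left 1 k)).le
      nlinarith [mul_le_mul_of_nonneg_right h1 hkpos.le,
        mul_le_mul_of_nonneg_left hk1 (mul_nonneg hD0.le hηk)]
    have hsum : (Finset.Icc (j/2) j).card •  (η (j+1) / (D * ((j:ℝ)+1)))
        ≤ ∑ k ∈ Finset.Icc (j/2) j, η (k+1) / ((k:ℝ)+1) :=
      Finset.card_nsmul_le_sum _ _ _ hlow
    have hcard : 2 * (Finset.Icc (j/2) j).card ≥ j + 1 := by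
      rw [Nat.card_Icc]; omega
    have hcardR : ((j:ℝ)+1) ≤ 2 * ((Finset.Icc (j/2) j).card : ℝ) := by
      have := (Nat.cast_le (α := ℝ)).mpr hcard; push_cast at this ⊢; linarith
    have hηj : 0 ≤ η (j+1) := (hηpos (j+1) (Nat.le_add_left 1 j)).le
    have hjpos : (0:ℝ) < (j:ℝ)+1 := by positivity
    rw [nsmul_eq_mul] at hsum
    calc η (j+1) = 2 * D * (((j:ℝ)+1) * (η (j+1) / (D * ((j:ℝ)+1)))) / 2 := by
          field_simp
      _ ≤ 2 * D * (2 * ((Finset.Icc (j/2) j).card : ℝ) * (η (j+1) / (D * ((j:ℝ)+1)))) / 2 := by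
          have hq : 0 ≤ η (j+1) / (D * ((j:ℝ)+1)) := by positivity
          gcongr
      _ = 2 * D * (((Finset.Icc (j/2) j).card : ℝ) * (η (j+1) / (D * ((j:ℝ)+1)))) := by ring
      _ ≤ 2 * D * ∑ k ∈ Finset.Icc (j/2) j, η (k+1) / ((k:ℝ)+1) := by
          have h2D : (0:ℝ) ≤ 2 * D := by positivity
          exact mul_le_mul_of_nonneg_left hsum h2D
  -- put it together
  calc ∑ j ∈ Finset.range N, (c j - c (j+1)) * η (j+1)
      ≤ ∑ j ∈ Finset.range N,
          (c j - c (j+1)) * (2 * D * ∑ k ∈ Finset.Icc (j/2) j, η (k+1) / ((k:ℝ)+1)) := by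
        refine Finset.sum_le_sum fun j _ => mul_le_mul_of_nonneg_left (key j) (hδ j)
    _ = 2 * D * ∑ j ∈ Finset.range N,
          ∑ k ∈ Finset.Icc (j/2) j, (c j - c (j+1)) * (η (k+1) / ((k:ℝ)+1)) := by
        simp only [Finset.mul_sum]
        exact Finset.sum_congr rfl fun j _ => Finset.sum_congr rfl fun k _ => by ring
    _ ≤ 2 * D * ∑ k ∈ Finset.range N, c k * (η (k+1) / ((k:ℝ)+1)) := by
        have h2D : (0:ℝ) ≤ 2 * D := by positivity
        refine mul_le_mul_of_nonneg_left ?_ h2D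
        have hswap : ∑ j ∈ Finset.range N,
            ∑ k ∈ Finset.Icc (j/2) j, (c j - c (j+1)) * (η (k+1) / ((k:ℝ)+1))
            = ∑ k ∈ Finset.range N, ∑ j ∈ Finset.range N,
                (if k ∈ Finset.Icc (j/2) j then (c j - c (j+1)) * (η (k+1) / ((k:ℝ)+1)) else 0) := by
          rw [← Finset.sum_comm]
          refine Finset.sum_congr rfl fun j hj => ?_
          rw [Finset.sum_ite_mem]
          have hsub : Finset.range N ∩ Finset.Icc (j/2) j = Finset.Icc (j/2) j := by
            refine Finset.inter_eq_right.mpr fun k hk => ?_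
            simp only [Finset.mem_Icc] at hk
            simp only [Finset.mem_range] at hj ⊢
            omega
          rw [hsub]
        rw [hswap]
        refine Finset.sum_le_sum fun k _ => ?_
        have hstep : ∑ j ∈ Finset.range N,
            (if k ∈ Finset.Icc (j/2) j then (c j - c (j+1)) * (η (k+1) / ((k:ℝ)+1)) else 0)
            ≤ ∑ j ∈ Finset.Icc k (2*k+1), (c j - c (j+1)) * (η (k+1) / ((k:ℝ)+1)) := by
          rw [← Finset.sum_filter]
          refine Finset.sum_le_sum_of_subset_of_nonneg ?_
            (fun j _ _ => mul_nonneg (hδ j) (hμ k))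
          intro j hj
          simp only [Finset.mem_filter, Finset.mem_range, Finset.mem_Icc] at hj ⊢
          omega
        refine hstep.trans ?_
        rw [← Finset.sum_mul]
        have htel : ∑ j ∈ Finset.Icc k (2*k+1), (c j - c (j+1)) = c k - c (2*k+2) := by
          rw [← Finset.Ico_add_one_right_eq_Icc,
            Finset.sum_Ico_eq_sub (fun j => c j - c (j+1)) (show k ≤ 2*k+1+1 by omega),
            show 2*k+1+1 = 2*k+2 from rfl,
            Finset.sum_range_sub' c, Finset.sum_range_sub' c]
          ring
        rw [htel]
        exact mul_le_mul_of_nonneg_right (by linarith [hc0 (2*k+2)]) (hμ k)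

end Aux

private lemma qg_abs_mul_sign (t : ℝ) : |t| * Real.sign t = t := by
  rcases lt_trichotomy t 0 with h|h|h
  · rw [Real.sign_of_neg h, abs_of_neg h]; ring
  · simp [h]
  · rw [Real.sign_of_pos h, abs_of_pos h]; ring

private lemma rearrange_le (a : ℕ → ℝ) (π : ℕ → ℕ) (hbij : Function.Bijective π)
    (hmono : ∀ k, |a (π (k+1))| ≤ |a (π k)|)
    (l : List ℕ) (hnd : l.Nodup)
    (hsorted : List.Pairwise (fun p q => |a q| ≤ |a p|) l)
    (j : ℕ) (hj : j < l.length) :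
    |a (l.get ⟨j, hj⟩)| ≤ |a (π j)| := by
  by_contra hcon
  push_neg at hcon
  have hanti : Antitone fun k => |a (π k)| := antitone_nat_of_succ_le hmono
  set E := Equiv.ofBijective π hbij with hE
  have hEπ : ∀ t : ℕ, E t = π t := fun t => rfl
  have hq : ∀ m : Fin (j+1), |a (π j)| < |a (l.get ⟨m.1, lt_of_lt_of_le m.isLt hj⟩)| := by
    intro m
    rcases eq_or_lt_of_le (Nat.lt_succ_iff.mp m.isLt) with h|h
    · have : (⟨m.1, lt_of_lt_of_le m.isLt hj⟩ : Fin l.length) = ⟨j, hj⟩ := by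
        ext; exact h
      rw [this]; exact hcon
    · refine hcon.trans_le ?_
      exact List.pairwise_iff_get.mp hsorted ⟨m.1, lt_of_lt_of_le m.isLt hj⟩ ⟨j, hj⟩
        (by simpa [Fin.lt_def] using h)
  have hFlt : ∀ m : Fin (j+1), E.symm (l.get ⟨m.1, lt_of_lt_of_le m.isLt hj⟩) < j := by
    intro m
    by_contra ht
    push_neg at ht
    have h1 : |a (π (E.symm (l.get ⟨m.1, lt_of_lt_of_le m.isLt hj⟩)))| ≤ |a (π j)| := hanti ht
    rw [← hEπ, Equiv.apply_symm_apply] at h1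
    exact absurd h1 (not_le.mpr (hq m))
  have hFinj : Function.Injective
      (fun m : Fin (j+1) => (⟨E.symm (l.get ⟨m.1, lt_of_lt_of_le m.isLt hj⟩), hFlt m⟩ : Fin j)) := by
    intro m1 m2 h
    simp only [Fin.mk.injEq] at h
    have h2 := E.symm.injective h
    have h3 := List.nodup_iff_injective_get.mp hnd h2
    ext
    simpa using congrArg Fin.val h3
  have := Fintype.card_le_of_injective _ hFinj
  simp only [Fintype.card_fin] at this
  omega

section Aux2

variable {X : Type*} [NormedAddCommGroup X] [NormedSpace ℝ X]

private lemma ubound (B : QGBasis X) (η : ℕ → ℝ) (hηmono : Monotone η)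
    (C₁ : ℝ) (hC₁ : 0 ≤ C₁)
    (hup : ∀ Γ : Finset ℕ, ‖∑ k ∈ Γ, B.e k‖ ≤ C₁ * η Γ.card)
    (a : ℕ → ℝ) (i : ℕ → ℕ) (n : ℕ) (hinj : Set.InjOn i ((Finset.range n : Finset ℕ) : Set ℕ)) :
    ‖∑ m ∈ Finset.range n, Real.sign (a (i m)) • B.e (i m)‖ ≤ 2 * (C₁ * η n) := by
  have hsplit : ∀ m ∈ Finset.range n, Real.sign (a (i m)) • B.e (i m)
      = (if 0 < a (i m) then B.e (i m) else 0) + (if a (i m) < 0 then -B.e (i m) else 0) := by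
    intro m _
    rcases lt_trichotomy (a (i m)) 0 with h|h|h
    · rw [Real.sign_of_neg h, if_neg (by linarith), if_pos h]; simp
    · rw [h, Real.sign_zero, if_neg (by simp), if_neg (by simp)]; simp
    · rw [Real.sign_of_pos h, if_pos h, if_neg (by linarith)]; simp
  rw [Finset.sum_congr rfl hsplit, Finset.sum_add_distrib,
    ← Finset.sum_filter, ← Finset.sum_filter]
  have hbound : ∀ s : Finset ℕ, s ⊆ Finset.range n → ‖∑ m ∈ s, B.e (i m)‖ ≤ C₁ * η n := by
    intro s hs
    have hinj' : Set.InjOn i (s : Set ℕ) := hinj.mono (by exact_mod_cast hs)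
    have hrw : ∑ m ∈ s, B.e (i m) = ∑ k ∈ s.image i, B.e k :=
      (Finset.sum_image (fun p hp q hq hpq =>
        hinj' (Finset.mem_coe.mpr hp) (Finset.mem_coe.mpr hq) hpq)).symm
    rw [hrw]
    refine (hup _).trans ?_
    have hcard : (s.image i).card ≤ n := by
      rw [Finset.card_image_of_injOn hinj']
      exact (Finset.card_le_card hs).trans (by simp)
    exact mul_le_mul_of_nonneg_left (hηmono hcard) hC₁
  have h1 := hbound _ (Finset.filter_subset (fun m => 0 < a (i m)) (Finset.range n))
  have h2 := hbound _ (Finset.filter_subset (fun m => a (i m) < 0) (Finset.range n))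
  have hneg : ∑ m ∈ Finset.filter (fun m => a (i m) < 0) (Finset.range n), -B.e (i m)
      = -∑ m ∈ Finset.filter (fun m => a (i m) < 0) (Finset.range n), B.e (i m) :=
    Finset.sum_neg_distrib _
  calc ‖_ + _‖ ≤ ‖∑ m ∈ Finset.filter (fun m => 0 < a (i m)) (Finset.range n), B.e (i m)‖
        + ‖∑ m ∈ Finset.filter (fun m => a (i m) < 0) (Finset.range n), -B.e (i m)‖ :=
      norm_add_le _ _
    _ ≤ 2 * (C₁ * η n) := by
      rw [hneg, norm_neg]; linarith

end Aux2

/-- upper estimate of the norm by the decreasing rearrangement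
(Lemma 2.1).  The right-hand side is interpreted in `ℝ≥0∞` so that the
inequality makes sense also when the series diverges.  Position `k` of the
greedy enumeration `π` carries the `(k+1)`-st largest coefficient. -/
theorem stmt1 {X : Type*} [NormedAddCommGroup X] [NormedSpace ℝ X] [CompleteSpace X]
    (B : QGBasis X) (K : ℝ) (hK : B.QuasiGreedyWith K)
    (η : ℕ → ℝ) (hηpos : ∀ k, 1 ≤ k → 0 < η k) (hηmono : Monotone η)
    (D : ℝ) (hηdbl : ∀ k, 1 ≤ k → η (2 * k) ≤ D * η k)
    (C₁ : ℝ) (hC₁ : 0 < C₁)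
    (hup : ∀ Γ : Finset ℕ, ‖∑ k ∈ Γ, B.e k‖ ≤ C₁ * η Γ.card) :
    ∃ C : ℝ, 0 < C ∧ ∀ (x : X) (π : ℕ → ℕ), B.IsGreedyPerm x π →
      ENNReal.ofReal ‖x‖ ≤ ENNReal.ofReal (2 * K * C) *
        ∑' k : ℕ, ENNReal.ofReal (|B.coeff (π k) x| * η (k + 1) / (k + 1)) := by
  have hD1 : (1:ℝ) ≤ D := by
    have h1 : 0 < η 1 := hηpos 1 le_rfl
    have h2 : η 1 ≤ η (2 * 1) := hηmono (by omega)
    have h3 : η (2 * 1) ≤ D * η 1 := hηdbl 1 le_rfl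
    nlinarith
  have hD0 : (0:ℝ) < D := lt_of_lt_of_le one_pos hD1
  have hK1 : (1:ℝ) ≤ K := by
    have hgp : B.IsGreedyPerm (B.e 0) id := by
      refine ⟨Function.bijective_id, fun k => ?_⟩
      simp [B.coeff_e]
    have h := (hK (B.e 0) id hgp 0).2
    have h0 : B.G id 0 (B.e 0) = 0 := by simp [QGBasis.G]
    rw [h0, sub_zero] at h
    have hpos : 0 < ‖B.e 0‖ := lt_of_lt_of_le B.c_norm_pos (B.norm_e_ge 0)
    nlinarith
  have hK0 : (0:ℝ) < K := lt_of_lt_of_le one_pos hK1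
  refine ⟨2 * C₁ * D, by positivity, ?_⟩
  intro x π hπ
  set a : ℕ → ℝ := fun k => B.coeff k x with ha
  have hμ : ∀ k : ℕ, 0 ≤ η (k+1) / ((k:ℝ)+1) := fun k =>
    div_nonneg (hηpos (k+1) (Nat.le_add_left 1 k)).le (by positivity)
  -- the finite-section estimate
  have hSN : ∀ N : ℕ, ‖∑ k ∈ Finset.range N, a k • B.e k‖
      ≤ 2 * K * (2 * C₁ * D) * ∑ k ∈ Finset.range N, |a (π k)| * (η (k+1) / ((k:ℝ)+1)) := by
    intro N
    set l : List ℕ := (List.range N).mergeSort (fun p q => decide (|a q| ≤ |a p|)) with hl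
    have hperm : l.Perm (List.range N) := List.mergeSort_perm _ _
    have hlen : l.length = N := hperm.length_eq.trans (List.length_range (n := N))
    have hnd : l.Nodup := hperm.nodup_iff.mpr (List.nodup_range (n := N))
    have hsorted : List.Pairwise (fun p q => |a q| ≤ |a p|) l := by
      have hs := List.pairwise_mergeSort
        (le := fun p q => decide (|a q| ≤ |a p|))
        (fun p q r h1 h2 => by
          simp only [decide_eq_true_eq] at *; exact h2.trans h1)
        (fun p q => by
          simp only [Bool.or_eq_true, decide_eq_true_eq]; exact le_total _ _)
        (List.range N)
      exact hs.imp (fun h => by simpa using h)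
    set c : ℕ → ℝ := fun j => if h : j < l.length then |a (l.get ⟨j, h⟩)| else 0 with hc
    set idx : ℕ → ℕ := fun j => l.getD j 0 with hidx
    set w : ℕ → X := fun j => Real.sign (a (idx j)) • B.e (idx j) with hw
    have hgetD : ∀ (j) (h : j < l.length), idx j = l.get ⟨j, h⟩ := fun j h =>
      by rw [hidx]; simp [List.getD_eq_getElem?_getD, h]
    have hc0 : ∀ j, 0 ≤ c j := by
      intro j
      simp only [hc]
      split
      · exact abs_nonneg _
      · exact le_refl 0
    have hcmono : ∀ j, c (j+1) ≤ c j := by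
      intro j
      by_cases h1 : j + 1 < l.length
      · have h0 : j < l.length := by omega
        simp only [hc, dif_pos h1, dif_pos h0]
        exact List.pairwise_iff_get.mp hsorted ⟨j, h0⟩ ⟨j+1, h1⟩ (by simp [Fin.lt_def])
      · simp only [hc, dif_neg h1]
        exact hc0 j
    have hccomp : ∀ j, c j ≤ |a (π j)| := by
      intro j
      by_cases h : j < l.length
      · simp only [hc, dif_pos h]
        exact rearrange_le a π hπ.1 hπ.2 l hnd hsorted j h
      · simp only [hc, dif_neg h]
        exact abs_nonneg _
    have hcN : c N = 0 := by
      simp only [hc]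
      rw [dif_neg (by omega)]
    have hinjN : Set.InjOn idx ((Finset.range N : Finset ℕ) : Set ℕ) := by
      intro m1 h1 m2 h2 heq
      simp only [Finset.coe_range, Set.mem_Iio] at h1 h2
      have hm1 : m1 < l.length := by omega
      have hm2 : m2 < l.length := by omega
      rw [hgetD m1 hm1, hgetD m2 hm2] at heq
      have h3 := List.nodup_iff_injective_get.mp hnd heq
      simpa using congrArg Fin.val h3
    -- representation of the partial sum
    have hrepr : ∑ k ∈ Finset.range N, a k • B.e k = ∑ j ∈ Finset.range N, c j • w j := by
      have himg : (Finset.range N).image idx = Finset.range N := by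
        refine Finset.eq_of_subset_of_card_le ?_ ?_
        · intro k hk
          simp only [Finset.mem_image] at hk
          obtain ⟨j, hj, rfl⟩ := hk
          have hjl : j < l.length := by rw [hlen]; exact Finset.mem_range.mp hj
          rw [hgetD j hjl]
          have hmem : l.get ⟨j, hjl⟩ ∈ l := List.get_mem l ⟨j, hjl⟩
          have hmem2 := hperm.mem_iff.mp hmem
          simpa using hmem2
        · rw [Finset.card_image_of_injOn hinjN, Finset.card_range]
      have h1 : ∀ j ∈ Finset.range N, c j • w j = a (idx j) • B.e (idx j) := by
        intro j hj
        have hjl : j < l.length := by rw [hlen]; exact Finset.mem_range.mp hj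
        simp only [hc, hw, dif_pos hjl, smul_smul]
        rw [← hgetD j hjl, qg_abs_mul_sign]
      rw [Finset.sum_congr rfl h1]
      conv_lhs => rw [← himg]
      rw [Finset.sum_image (fun p hp q hq hpq =>
        hinjN (Finset.mem_coe.mpr hp) (Finset.mem_coe.mpr hq) hpq)]
    -- bound on the flattened partial sums
    have hU : ∀ j < N, ‖∑ m ∈ Finset.range (j+1), w m‖ ≤ 2 * (C₁ * η (j+1)) := by
      intro j hj
      refine ubound B η hηmono C₁ hC₁.le hup a idx (j+1) ?_
      refine hinjN.mono ?_
      intro m hm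
      simp only [Finset.coe_range, Set.mem_Iio] at hm ⊢
      omega
    have hδ : ∀ j, 0 ≤ c j - c (j+1) := fun j => sub_nonneg.mpr (hcmono j)
    have hsum0 : 0 ≤ ∑ k ∈ Finset.range N, |a (π k)| * (η (k+1) / ((k:ℝ)+1)) :=
      Finset.sum_nonneg fun k _ => mul_nonneg (abs_nonneg _) (hμ k)
    calc ‖∑ k ∈ Finset.range N, a k • B.e k‖
        = ‖∑ j ∈ Finset.range N, (c j - c (j+1)) • ∑ m ∈ Finset.range (j+1), w m‖ := by
          rw [hrepr, abel_sum c w N, hcN, zero_smul, add_zero]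
      _ ≤ ∑ j ∈ Finset.range N, ‖(c j - c (j+1)) • ∑ m ∈ Finset.range (j+1), w m‖ :=
          norm_sum_le _ _
      _ ≤ ∑ j ∈ Finset.range N, (c j - c (j+1)) * (2 * (C₁ * η (j+1))) := by
          refine Finset.sum_le_sum fun j hj => ?_
          rw [norm_smul, Real.norm_eq_abs, abs_of_nonneg (hδ j)]
          exact mul_le_mul_of_nonneg_left (hU j (Finset.mem_range.mp hj)) (hδ j)
      _ = 2 * C₁ * ∑ j ∈ Finset.range N, (c j - c (j+1)) * η (j+1) := by
          rw [Finset.mul_sum]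
          exact Finset.sum_congr rfl fun j _ => by ring
      _ ≤ 2 * C₁ * (2 * D * ∑ k ∈ Finset.range N, c k * (η (k+1) / ((k:ℝ)+1))) :=
          mul_le_mul_of_nonneg_left
            (weight_bound η hηpos hηmono D hηdbl hD1 c hcmono hc0 N) (by positivity)
      _ ≤ 2 * C₁ * (2 * D * ∑ k ∈ Finset.range N, |a (π k)| * (η (k+1) / ((k:ℝ)+1))) := by
          refine mul_le_mul_of_nonneg_left (mul_le_mul_of_nonneg_left
            (Finset.sum_le_sum fun k _ =>
              mul_le_mul_of_nonneg_right (hccomp k) (hμ k)) (by positivity)) (by positivity)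
      _ ≤ 2 * K * (2 * C₁ * D) * ∑ k ∈ Finset.range N, |a (π k)| * (η (k+1) / ((k:ℝ)+1)) := by
          nlinarith [mul_nonneg (mul_nonneg (by positivity : (0:ℝ) ≤ 4 * C₁ * D) hsum0)
            (sub_nonneg.mpr hK1)]
  -- pass to the limit
  set T : ENNReal := ∑' k : ℕ, ENNReal.ofReal (|B.coeff (π k) x| * η (k + 1) / (k + 1)) with hT
  have hterm : ∀ k : ℕ, |a (π k)| * (η (k+1) / ((k:ℝ)+1))
      = |B.coeff (π k) x| * η (k + 1) / ((k : ℝ) + 1) := by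
    intro k
    rw [ha]
    ring
  by_cases hTtop : T = ⊤
  · rw [hTtop, ENNReal.mul_top (by
      simp only [ne_eq, ENNReal.ofReal_eq_zero, not_le]
      positivity)]
    exact le_top
  · have hfin : ∀ N : ℕ, ∑ k ∈ Finset.range N, |a (π k)| * (η (k+1) / ((k:ℝ)+1)) ≤ T.toReal := by
      intro N
      have h1 : ENNReal.ofReal (∑ k ∈ Finset.range N, |a (π k)| * (η (k+1) / ((k:ℝ)+1)))
          = ∑ k ∈ Finset.range N, ENNReal.ofReal (|B.coeff (π k) x| * η (k + 1) / ((k:ℝ) + 1)) := by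
        rw [ENNReal.ofReal_sum_of_nonneg fun k _ => mul_nonneg (abs_nonneg _) (hμ k)]
        exact Finset.sum_congr rfl fun k _ => by rw [hterm k]
      have h2 : (∑ k ∈ Finset.range N, ENNReal.ofReal
          (|B.coeff (π k) x| * η (k + 1) / ((k:ℝ) + 1))) ≤ T := ENNReal.sum_le_tsum _
      have h3 := ENNReal.toReal_mono hTtop (h1 ▸ h2)
      rwa [ENNReal.toReal_ofReal (Finset.sum_nonneg fun k _ =>
        mul_nonneg (abs_nonneg _) (hμ k))] at h3
    have hxle : ‖x‖ ≤ 2 * K * (2 * C₁ * D) * T.toReal := by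
      refine le_of_tendsto' (B.expansion x).norm fun N => ?_
      exact (hSN N).trans (mul_le_mul_of_nonneg_left (hfin N) (by positivity))
    calc ENNReal.ofReal ‖x‖ ≤ ENNReal.ofReal (2 * K * (2 * C₁ * D) * T.toReal) :=
          ENNReal.ofReal_le_ofReal hxle
      _ = ENNReal.ofReal (2 * K * (2 * C₁ * D)) * ENNReal.ofReal T.toReal := by
          rw [ENNReal.ofReal_mul (by positivity)]
      _ = ENNReal.ofReal (2 * K * (2 * C₁ * D)) * T := by rw [ENNReal.ofReal_toReal hTtop]
end

section
/- Let B = {e_k} be a quasi-greedy basis with quasi-greedy constant K in a real Banach space X. Suppose there exist C₂ > 0 and a function η: ℕ → (0,∞) such that (1/C₂)·η(|Γ|) ≤ ‖Σ_{k∈Γ} e_k‖ for all finite Γ ⊂ ℕ. Then for every x = Σ_k a_k(x) e_k ∈ X, sup_k a_k*(x) η(k) ≤ 4C₂K³ ‖x‖, where (a_k*(x)) is the decreasing rearrangement of (|a_k(x)|). -/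
open Finset Filter

namespace QGBasis
variable {X : Type*} [NormedAddCommGroup X] [NormedSpace ℝ X] (B : QGBasis X)

lemma coeff_sum {ι : Type*} (j : ℕ) (s : Finset ι) (f : ι → X) :
    B.coeff j (∑ i ∈ s, f i) = ∑ i ∈ s, B.coeff j (f i) :=
  map_sum (AddMonoidHom.mk' (B.coeff j) (fun u v => B.coeff_add j u v)) f s

lemma one_le_K {K : ℝ} (hK : B.QuasiGreedyWith K) : 1 ≤ K := by
  have h0 : B.IsGreedyPerm (B.e 0) id := by
    refine ⟨Function.bijective_id, fun k => ?_⟩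
    simp only [id_eq, B.coeff_e]
    rcases Nat.eq_zero_or_pos k with rfl | hk
    · simp
    · simp [Nat.pos_iff_ne_zero.1 hk, (by omega : k + 1 ≠ 0)]
  have h1 := (hK (B.e 0) id h0 1).1
  have hG1 : B.G id 1 (B.e 0) = B.e 0 := by
    simp [QGBasis.G, B.coeff_e]
  rw [hG1] at h1
  have he0 : 0 < ‖B.e 0‖ := lt_of_lt_of_le B.c_norm_pos (B.norm_e_ge 0)
  nlinarith


end QGBasis

lemma exists_perm (A Γ : Finset ℕ) (hAΓ : A ⊆ Γ) :
    ∃ σ : ℕ → ℕ, Function.Bijective σ ∧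
      (Finset.range A.card).image σ = A ∧ (Finset.range Γ.card).image σ = Γ := by
  classical
  set l : List ℕ := A.sort (· ≤ ·) ++ (Γ \ A).sort (· ≤ ·) with hl
  have hcards : A.card ≤ Γ.card := Finset.card_le_card hAΓ
  have hlen : l.length = Γ.card := by
    have h1 := Finset.card_sdiff_of_subset hAΓ
    simp only [hl, List.length_append, Finset.length_sort]
    omega
  have hmeml : ∀ m, m ∈ l ↔ m ∈ Γ := by
    intro m
    simp only [hl, List.mem_append, Finset.mem_sort, Finset.mem_sdiff]
    constructor
    · rintro (h | ⟨h, _⟩) <;> [exact hAΓ h; exact h]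
    · intro h; by_cases hA : m ∈ A <;> simp [hA, h]
  have hnodup : l.Nodup := by
    refine List.Nodup.append (Finset.sort_nodup _ _) (Finset.sort_nodup _ _) ?_
    intro m hm hm'
    simp only [Finset.mem_sort, Finset.mem_sdiff] at hm hm'
    exact hm'.2 hm
  set p : ℕ → Prop := fun n => n ∉ Γ with hpdef
  have hpinf : (setOf p).Infinite := by
    have := (Γ.finite_toSet).infinite_compl
    convert this using 1
    ext n; exact Iff.rfl
  set σ : ℕ → ℕ := fun i => if h : i < l.length then l[i] else Nat.nth p (i - l.length)
    with hσ
  have hσlt : ∀ i (h : i < l.length), σ i = l[i] := by intro i h; simp [hσ, h]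
  have hσge : ∀ i, l.length ≤ i → σ i = Nat.nth p (i - l.length) := by
    intro i h; simp [hσ, Nat.not_lt.2 h]
  have hmemget : ∀ i (h : i < l.length), l[i] ∈ Γ := fun i h => (hmeml _).1 (l.getElem_mem h)
  have hnth : ∀ t, Nat.nth p t ∉ Γ := fun t => Nat.nth_mem_of_infinite hpinf t
  have hinj : Function.Injective σ := by
    intro i j hij
    by_cases hi : i < l.length <;> by_cases hj : j < l.length
    · rw [hσlt i hi, hσlt j hj] at hij
      exact hnodup.getElem_inj_iff.1 hij
    · rw [hσlt i hi, hσge j (Nat.not_lt.1 hj)] at hij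
      exact absurd (hij ▸ hmemget i hi) (hnth _)
    · rw [hσge i (Nat.not_lt.1 hi), hσlt j hj] at hij
      exact absurd (hij.symm ▸ hmemget j hj) (hnth _)
    · rw [hσge i (Nat.not_lt.1 hi), hσge j (Nat.not_lt.1 hj)] at hij
      have := Nat.nth_injective hpinf hij
      omega
  have hsurj : Function.Surjective σ := by
    intro m
    by_cases hm : m ∈ Γ
    · obtain ⟨i, hi, hget⟩ := List.mem_iff_getElem.1 ((hmeml m).2 hm)
      exact ⟨i, by rw [hσlt i hi]; exact hget⟩
    · obtain ⟨t, ht⟩ : m ∈ Set.range (Nat.nth p) := by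
        rw [Nat.range_nth_of_infinite hpinf]; exact hm
      exact ⟨l.length + t, by rw [hσge _ (Nat.le_add_right _ _)]; simpa using ht⟩
  have hcardA : A.card ≤ l.length := by rw [hlen]; exact hcards
  have hgetA : ∀ i (h : i < A.card), ∃ h2 : i < (A.sort (· ≤ ·)).length, σ i = (A.sort (· ≤ ·))[i] := by
    intro i h
    have h2 : i < (A.sort (· ≤ ·)).length := by simpa using h
    refine ⟨h2, ?_⟩
    rw [hσlt i (lt_of_lt_of_le h hcardA)]
    exact List.getElem_append_left h2
  have himA : (Finset.range A.card).image σ = A := by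
    ext m
    simp only [Finset.mem_image, Finset.mem_range]
    constructor
    · rintro ⟨i, hi, rfl⟩
      obtain ⟨h2, hEq⟩ := hgetA i hi
      rw [hEq]
      exact (Finset.mem_sort _).1 ((A.sort (· ≤ ·)).getElem_mem h2)
    · intro hm
      obtain ⟨i, hi, hget⟩ := List.mem_iff_getElem.1 ((Finset.mem_sort (α := ℕ) (· ≤ ·)).2 hm)
      have hi2 : i < A.card := by simpa using hi
      obtain ⟨h2, hEq⟩ := hgetA i hi2
      exact ⟨i, hi2, by rw [hEq]; exact hget⟩
  have himΓ : (Finset.range Γ.card).image σ = Γ := by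
    ext m
    simp only [Finset.mem_image, Finset.mem_range, ← hlen]
    constructor
    · rintro ⟨i, hi, rfl⟩
      rw [hσlt i hi]
      exact hmemget i hi
    · intro hm
      obtain ⟨i, hi, hget⟩ := List.mem_iff_getElem.1 ((hmeml m).2 hm)
      exact ⟨i, hi, by rw [hσlt i hi]; exact hget⟩
  exact ⟨σ, ⟨hinj, hsurj⟩, himA, himΓ⟩


/-- lower democracy estimates control the decreasing rearrangement
(Lemma 2.2): `sup_k a_k*(x) η(k) ≤ 4 C₂ K³ ‖x‖`, stated as a bound for every
`k` (position `k` of `π` carries the `(k+1)`-st largest coefficient). -/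
theorem stmt2 {X : Type*} [NormedAddCommGroup X] [NormedSpace ℝ X] [CompleteSpace X]
    (B : QGBasis X) (K : ℝ) (hK : B.QuasiGreedyWith K)
    (η : ℕ → ℝ) (hηpos : ∀ k, 1 ≤ k → 0 < η k)
    (C₂ : ℝ) (hC₂ : 0 < C₂)
    (hlow : ∀ Γ : Finset ℕ, (1 / C₂) * η Γ.card ≤ ‖∑ k ∈ Γ, B.e k‖)
    (x : X) (π : ℕ → ℕ) (hπ : B.IsGreedyPerm x π) :
    ∀ k : ℕ, |B.coeff (π k) x| * η (k + 1) ≤ C₂ * (4 * K ^ 3) * ‖x‖ := by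
  classical
  intro k
  have hK1 : 1 ≤ K := B.one_le_K hK
  have hK0 : 0 ≤ K := by linarith
  have hxnn : (0:ℝ) ≤ ‖x‖ := norm_nonneg x
  have hπinj : Function.Injective π := hπ.1.1
  have hanti : Antitone fun i => |B.coeff (π i) x| := antitone_nat_of_succ_le hπ.2
  set a : ℝ := |B.coeff (π k) x| with ha
  have hann : 0 ≤ a := abs_nonneg _
  by_cases ha0 : a = 0
  · rw [ha0, zero_mul]
    have : (0:ℝ) ≤ 4 * K ^ 3 := by positivity
    positivity
  have hapos : 0 < a := lt_of_le_of_ne hann (Ne.symm ha0)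
  set n := k + 1 with hn
  -- the greedy set
  set Γ : Finset ℕ := (Finset.range n).image π with hΓ
  have hcardΓ : Γ.card = n := by
    rw [hΓ, Finset.card_image_of_injective _ hπinj, Finset.card_range]
  have hmemΓ : ∀ i, π i ∈ Γ ↔ i < n := by
    intro i
    constructor
    · intro h
      obtain ⟨j, hj, hji⟩ := Finset.mem_image.1 h
      rw [← hπinj hji]
      exact Finset.mem_range.1 hj
    · intro h
      exact Finset.mem_image.2 ⟨i, Finset.mem_range.2 h, rfl⟩
  have hcge : ∀ i, i ≤ k → a ≤ |B.coeff (π i) x| := fun i hi => hanti hi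
  have hcne : ∀ i, i < n → B.coeff (π i) x ≠ 0 := by
    intro i hi h
    have := hcge i (by omega)
    rw [h, abs_zero] at this
    linarith
  -- signs
  set ε : ℕ → ℝ := fun j => if 0 ≤ B.coeff j x then 1 else -1 with hε
  have hεabs : ∀ j, |ε j| = 1 := by
    intro j; simp only [hε]; split <;> simp
  -- the sign vector z
  set z : X := ∑ j ∈ Γ, ε j • B.e j with hz
  have hcoeffz : ∀ j, B.coeff j z = if j ∈ Γ then ε j else 0 := by
    intro j
    rw [hz, B.coeff_sum]
    have : ∀ m ∈ Γ, B.coeff j (ε m • B.e m) = if j = m then ε m else 0 := by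
      intro m _
      rw [B.coeff_smul, B.coeff_e]
      split <;> simp
    rw [Finset.sum_congr rfl this, Finset.sum_ite_eq]
  -- z as a range sum
  have hz2 : z = ∑ i ∈ Finset.range n, ε (π i) • B.e (π i) := by
    rw [hz, hΓ]
    exact Finset.sum_image (fun u _ v _ h => hπinj h)
  -- Abel summation
  set c : ℕ → ℝ := fun i => |B.coeff (π i) x|⁻¹ with hc
  have hcnn : ∀ i, 0 ≤ c i := fun i => by rw [hc]; positivity
  have hcz : ∀ i, i < n → c i • (B.coeff (π i) x • B.e (π i)) = ε (π i) • B.e (π i) := by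
    intro i hi
    rw [smul_smul]
    congr 1
    have hne := hcne i hi
    simp only [hc, hε]
    rcases le_or_gt 0 (B.coeff (π i) x) with h | h
    · rw [if_pos h, abs_of_nonneg h, inv_mul_cancel₀ hne]
    · rw [if_neg (not_le.2 h), abs_of_neg h, inv_neg, neg_mul, inv_mul_cancel₀ hne]
  have habel := Finset.sum_range_by_parts c (fun i => B.coeff (π i) x • B.e (π i)) n
  have hGdef : ∀ m, (∑ i ∈ Finset.range m, B.coeff (π i) x • B.e (π i)) = B.G π m x :=
    fun m => rfl
  have hzeq : z = c k • B.G π n x -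
      ∑ i ∈ Finset.range k, (c (i + 1) - c i) • B.G π (i + 1) x := by
    have h1 : z = ∑ i ∈ Finset.range n, c i • (B.coeff (π i) x • B.e (π i)) := by
      rw [hz2]
      exact Finset.sum_congr rfl (fun i hi => (hcz i (Finset.mem_range.1 hi)).symm)
    rw [h1, habel]
    simp only [hn, Nat.add_sub_cancel, hGdef]
  have hGb : ∀ m, ‖B.G π m x‖ ≤ K * ‖x‖ := fun m => (hK x π hπ m).1
  have hcmono : ∀ i, i < k → c i ≤ c (i + 1) := by
    intro i hi
    rw [hc]
    have h1 : a ≤ |B.coeff (π (i+1)) x| := hcge (i+1) (by omega)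
    have h2 : |B.coeff (π (i+1)) x| ≤ |B.coeff (π i) x| := hπ.2 i
    exact inv_anti₀ (by linarith) h2
  have hsumtel : ∑ i ∈ Finset.range k, (c (i + 1) - c i) = c k - c 0 :=
    Finset.sum_range_sub c k
  have hznorm : ‖z‖ ≤ 2 * c k * (K * ‖x‖) := by
    rw [hzeq]
    have h1 : ‖c k • B.G π n x‖ ≤ c k * (K * ‖x‖) := by
      rw [norm_smul, Real.norm_eq_abs, abs_of_nonneg (hcnn k)]
      exact mul_le_mul_of_nonneg_left (hGb n) (hcnn k)
    have h2 : ‖∑ i ∈ Finset.range k, (c (i + 1) - c i) • B.G π (i + 1) x‖ ≤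
        (c k - c 0) * (K * ‖x‖) := by
      calc ‖∑ i ∈ Finset.range k, (c (i + 1) - c i) • B.G π (i + 1) x‖
          ≤ ∑ i ∈ Finset.range k, ‖(c (i + 1) - c i) • B.G π (i + 1) x‖ :=
            norm_sum_le _ _
        _ ≤ ∑ i ∈ Finset.range k, (c (i + 1) - c i) * (K * ‖x‖) := by
            refine Finset.sum_le_sum fun i hi => ?_
            rw [norm_smul, Real.norm_eq_abs,
              abs_of_nonneg (by linarith [hcmono i (Finset.mem_range.1 hi)])]
            exact mul_le_mul_of_nonneg_left (hGb (i+1))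
              (by linarith [hcmono i (Finset.mem_range.1 hi)])
        _ = (c k - c 0) * (K * ‖x‖) := by rw [← Finset.sum_mul, hsumtel]
    calc ‖c k • B.G π n x - ∑ i ∈ Finset.range k, (c (i + 1) - c i) • B.G π (i + 1) x‖
        ≤ ‖c k • B.G π n x‖ + ‖∑ i ∈ Finset.range k, (c (i + 1) - c i) • B.G π (i + 1) x‖ :=
          norm_sub_le _ _
      _ ≤ c k * (K * ‖x‖) + (c k - c 0) * (K * ‖x‖) := by linarith
      _ ≤ 2 * c k * (K * ‖x‖) := by
          have := hcnn 0
          have hKx : 0 ≤ K * ‖x‖ := by positivity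
          nlinarith
  have hack : a * c k = 1 := by
    rw [hc, ha]
    exact mul_inv_cancel₀ ha0
  have haz : a * ‖z‖ ≤ 2 * (K * ‖x‖) := by
    calc a * ‖z‖ ≤ a * (2 * c k * (K * ‖x‖)) :=
          mul_le_mul_of_nonneg_left hznorm hann
      _ = 2 * (a * c k) * (K * ‖x‖) := by ring
      _ = 2 * (K * ‖x‖) := by rw [hack]; ring
  -- sign removal
  set A : Finset ℕ := Γ.filter (fun j => 0 ≤ B.coeff j x) with hA
  have hAΓ : A ⊆ Γ := Finset.filter_subset _ _
  obtain ⟨σ, hσbij, himA, himΓ⟩ := exists_perm A Γ hAΓ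
  have hmemΓσ : ∀ i, σ i ∈ Γ ↔ i < Γ.card := by
    intro i
    constructor
    · intro h
      rw [← himΓ] at h
      obtain ⟨j, hj, hji⟩ := Finset.mem_image.1 h
      rw [← hσbij.1 hji]
      exact Finset.mem_range.1 hj
    · intro h
      rw [← himΓ]
      exact Finset.mem_image.2 ⟨i, Finset.mem_range.2 h, rfl⟩
  have hgz : B.IsGreedyPerm z σ := by
    refine ⟨hσbij, fun i => ?_⟩
    rw [hcoeffz, hcoeffz]
    by_cases h1 : σ (i+1) ∈ Γ
    · have : i + 1 < Γ.card := (hmemΓσ _).1 h1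
      rw [if_pos h1, if_pos ((hmemΓσ i).2 (by omega)), hεabs, hεabs]
    · rw [if_neg h1]
      simp [abs_nonneg]
  have hGa : B.G σ A.card z = ∑ j ∈ A, B.e j := by
    have h1 : ∑ j ∈ A, B.coeff j z • B.e j = B.G σ A.card z := by
      conv_lhs => rw [← himA]
      exact Finset.sum_image (fun u _ v _ h => hσbij.1 h)
    rw [← h1]
    refine Finset.sum_congr rfl fun j hj => ?_
    rw [hcoeffz, if_pos (hAΓ hj)]
    have : 0 ≤ B.coeff j x := (Finset.mem_filter.1 hj).2
    simp only [hε]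
    simp [this]
  have hsplitz : ∑ j ∈ Γ \ A, ε j • B.e j + ∑ j ∈ A, ε j • B.e j = z := by
    rw [hz]
    exact Finset.sum_sdiff hAΓ
  have hsdiff : ∑ j ∈ Γ \ A, ε j • B.e j = - ∑ j ∈ Γ \ A, B.e j := by
    rw [← Finset.sum_neg_distrib]
    refine Finset.sum_congr rfl fun j hj => ?_
    have hj2 := Finset.mem_sdiff.1 hj
    have : ¬ 0 ≤ B.coeff j x := by
      intro h
      exact hj2.2 (Finset.mem_filter.2 ⟨hj2.1, h⟩)
    simp only [hε]
    simp [this]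
  have hAsum : ∑ j ∈ A, ε j • B.e j = ∑ j ∈ A, B.e j := by
    refine Finset.sum_congr rfl fun j hj => ?_
    have : 0 ≤ B.coeff j x := (Finset.mem_filter.1 hj).2
    simp only [hε]
    simp [this]
  have hΓsplit : ∑ j ∈ Γ, B.e j = 2 • B.G σ A.card z - z := by
    have h1 : ∑ j ∈ Γ \ A, B.e j + ∑ j ∈ A, B.e j = ∑ j ∈ Γ, B.e j :=
      Finset.sum_sdiff hAΓ
    have h2 : ∑ j ∈ Γ \ A, B.e j = B.G σ A.card z - z := by
      have := hsplitz
      rw [hsdiff, hAsum] at this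
      have h3 : ∑ j ∈ A, B.e j = B.G σ A.card z := hGa.symm
      rw [h3] at this
      linear_combination (norm := abel) -this
    rw [← h1, h2, hGa]
    abel
  have hΓnorm : ‖∑ j ∈ Γ, B.e j‖ ≤ 2 * (K * ‖z‖) := by
    rw [hΓsplit]
    have h1 : ‖B.G σ A.card z‖ ≤ K * ‖z‖ := (hK z σ hgz A.card).1
    have h2 : ‖z - B.G σ A.card z‖ ≤ K * ‖z‖ := (hK z σ hgz A.card).2
    have : (2:ℕ) • B.G σ A.card z - z = B.G σ A.card z - (z - B.G σ A.card z) := by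
      rw [two_smul]; abel
    rw [this]
    calc ‖B.G σ A.card z - (z - B.G σ A.card z)‖
        ≤ ‖B.G σ A.card z‖ + ‖z - B.G σ A.card z‖ := norm_sub_le _ _
      _ ≤ 2 * (K * ‖z‖) := by linarith
  -- combine
  have hlowΓ := hlow Γ
  rw [hcardΓ] at hlowΓ
  have hη : η n ≤ C₂ * ‖∑ j ∈ Γ, B.e j‖ := by
    have := mul_le_mul_of_nonneg_left hlowΓ (le_of_lt hC₂)
    calc η n = C₂ * (1 / C₂ * η n) := by field_simp
      _ ≤ C₂ * ‖∑ j ∈ Γ, B.e j‖ := this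
  have hznn : (0:ℝ) ≤ ‖z‖ := norm_nonneg z
  have hfinal : a * ‖∑ j ∈ Γ, B.e j‖ ≤ 4 * K^2 * ‖x‖ := by
    calc a * ‖∑ j ∈ Γ, B.e j‖ ≤ a * (2 * (K * ‖z‖)) :=
          mul_le_mul_of_nonneg_left hΓnorm hann
      _ = 2 * K * (a * ‖z‖) := by ring
      _ ≤ 2 * K * (2 * (K * ‖x‖)) := by
          refine mul_le_mul_of_nonneg_left haz (by positivity)
      _ = 4 * K^2 * ‖x‖ := by ring
  have hK23 : 4 * K^2 * ‖x‖ ≤ 4 * K^3 * ‖x‖ := by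
    nlinarith [mul_nonneg (mul_nonneg hK0 hK0) hxnn]
  calc a * η n ≤ a * (C₂ * ‖∑ j ∈ Γ, B.e j‖) := mul_le_mul_of_nonneg_left hη hann
    _ = C₂ * (a * ‖∑ j ∈ Γ, B.e j‖) := by ring
    _ ≤ C₂ * (4 * K^2 * ‖x‖) := mul_le_mul_of_nonneg_left hfinal (le_of_lt hC₂)
    _ ≤ C₂ * (4 * K^3 * ‖x‖) := mul_le_mul_of_nonneg_left hK23 (le_of_lt hC₂)
    _ = C₂ * (4 * K ^ 3) * ‖x‖ := by ring
end

section
/- Let B = {e_k} be a quasi-greedy basis with quasi-greedy constant K in a real Banach space X. For any finite set Γ ⊂ ℕ, the coordinate projection S_Γ(x) = Σ_{k∈Γ} a_k(x) e_k satisfies ‖S_Γ(x)‖ ≲ 8K⁴·(Σ_{k=1}^{|Γ|} μ(k)/k)·‖x‖ for all x ∈ X, with implicit constant independent of Γ and x. -/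
open Finset Filter

namespace QGBasis

variable {X : Type*} [NormedAddCommGroup X] [NormedSpace ℝ X] (B : QGBasis X)

/-! ### auxiliary -/

lemma aux_coeff_zero (k : ℕ) : B.coeff k (0 : X) = 0 := by
  have := B.coeff_smul k 0 (0 : X)
  simpa using this

lemma aux_coeff_sum (j : ℕ) (A : Finset ℕ) (g : ℕ → X) :
    B.coeff j (∑ k ∈ A, g k) = ∑ k ∈ A, B.coeff j (g k) := by
  classical
  induction A using Finset.induction_on with
  | empty => simpa using B.aux_coeff_zero j
  | insert a s h ih =>
      rw [Finset.sum_insert h, B.coeff_add, ih, Finset.sum_insert h]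

lemma aux_coeff_S (j : ℕ) (A : Finset ℕ) (b : ℕ → ℝ) :
    B.coeff j (∑ k ∈ A, b k • B.e k) = if j ∈ A then b j else 0 := by
  classical
  rw [aux_coeff_sum]
  have : ∀ k ∈ A, B.coeff j (b k • B.e k) = if k = j then b j else 0 := by
    intro k _
    rw [B.coeff_smul, B.coeff_e]
    by_cases h : j = k
    · subst h; simp
    · simp [h, Ne.symm h]
  rw [Finset.sum_congr rfl this, Finset.sum_ite_eq' A j (fun _ => b j)]

lemma list_sum_toFinset {M : Type*} [AddCommMonoid M] (l : List ℕ) (h : l.Nodup) (f : ℕ → M) :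
    l.toFinset.sum f = (l.map f).sum := by
  induction l with
  | nil => simp
  | cons a t ih =>
      simp only [List.nodup_cons] at h
      rw [List.toFinset_cons, Finset.sum_insert (by simpa [List.mem_toFinset] using h.1),
        List.map_cons, List.sum_cons, ih h.2]

/-- decreasing-modulus order -/
def Desc (x : X) (i j : ℕ) : Prop := |B.coeff j x| ≤ |B.coeff i x|

/-- construct a greedy permutation extending a sorted list containing the support -/
lemma exists_greedyPerm (x : X) (l : List ℕ) (hnd : l.Nodup)
    (hp : List.Pairwise (B.Desc x) l)
    (hsupp : ∀ k, B.coeff k x ≠ 0 → k ∈ l) :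
    ∃ π, B.IsGreedyPerm x π ∧ ∀ i (h : i < l.length), π i = l.get ⟨i, h⟩ := by
  classical
  set n := l.length with hn
  have hinf : {m : ℕ | m ∉ l}.Infinite := by
    have : {m : ℕ | m ∉ l} = (↑l.toFinset : Set ℕ)ᶜ := by
      ext m; simp [List.mem_toFinset]
    rw [this]
    exact (l.toFinset.finite_toSet).infinite_compl
  set π : ℕ → ℕ := fun i => if h : i < n then l.get ⟨i, h⟩ else Nat.nth (· ∉ l) (i - n) with hπ
  have hπlt : ∀ i (h : i < n), π i = l.get ⟨i, h⟩ := fun i h => dif_pos h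
  have hπge : ∀ i, n ≤ i → π i = Nat.nth (· ∉ l) (i - n) := fun i h => dif_neg (by omega)
  have hmemπ : ∀ i (h : i < n), π i ∈ l := fun i h => by rw [hπlt i h]; exact l.get_mem ⟨i, h⟩
  have hnotmem : ∀ i, n ≤ i → π i ∉ l := fun i h => by
    rw [hπge i h]; exact Nat.nth_mem_of_infinite hinf _
  refine ⟨π, ⟨⟨?_, ?_⟩, ?_⟩, hπlt⟩
  · -- injective
    intro i j hij
    by_cases hi : i < n <;> by_cases hj : j < n
    · rw [hπlt i hi, hπlt j hj] at hij
      exact congrArg Fin.val ((hnd.get_inj_iff).mp hij)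
    · exact absurd (hij ▸ hmemπ i hi) (hnotmem j (by omega))
    · exact absurd (hij.symm ▸ hmemπ j hj) (hnotmem i (by omega))
    · rw [hπge i (by omega), hπge j (by omega)] at hij
      have := Nat.nth_injective hinf hij
      omega
  · -- surjective
    intro m
    by_cases hm : m ∈ l
    · obtain ⟨i, hi⟩ := List.mem_iff_get.mp hm
      exact ⟨i, by rw [hπlt i i.isLt]; exact hi⟩
    · have : m ∈ Set.range (Nat.nth (· ∉ l)) := by
        rw [Nat.range_nth_of_infinite hinf]; exact hm
      obtain ⟨j, hj⟩ := this
      exact ⟨n + j, by rw [hπge (n + j) (by omega)]; simpa using hj⟩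
  · -- decreasing
    intro k
    by_cases hk1 : k + 1 < n
    · have hk : k < n := by omega
      rw [hπlt _ hk1, hπlt _ hk]
      exact List.pairwise_iff_get.mp hp ⟨k, hk⟩ ⟨k + 1, hk1⟩ (by simp)
    · have : B.coeff (π (k + 1)) x = 0 := by
        by_contra h
        exact hnotmem _ (by omega) (hsupp _ h)
      rw [this]
      simp [abs_nonneg]

lemma list_map_sum_range {M : Type*} [AddCommMonoid M] (l : List ℕ) (f : ℕ → M) :
    (l.map f).sum = ∑ i ∈ Finset.range l.length, f (l.getD i 0) := by
  induction l with
  | nil => simp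
  | cons a t ih =>
      rw [List.map_cons, List.sum_cons, ih, List.length_cons, Finset.sum_range_succ']
      simp [add_comm]

/-- sorted list (decreasing coefficient modulus) of a finset -/
noncomputable def dsortL (x : X) (Sf : Finset ℕ) : List ℕ :=
  (Sf.sort (· ≤ ·)).mergeSort (fun i j => decide (|B.coeff j x| ≤ |B.coeff i x|))

lemma dsortL_perm (x : X) (Sf : Finset ℕ) : (B.dsortL x Sf).Perm (Sf.sort (· ≤ ·)) :=
  List.mergeSort_perm _ _

lemma mem_dsortL {x : X} {Sf : Finset ℕ} {k : ℕ} : k ∈ B.dsortL x Sf ↔ k ∈ Sf := by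
  rw [(B.dsortL_perm x Sf).mem_iff, Finset.mem_sort]

lemma dsortL_nodup (x : X) (Sf : Finset ℕ) : (B.dsortL x Sf).Nodup :=
  (B.dsortL_perm x Sf).nodup_iff.mpr (Sf.sort_nodup _)

lemma dsortL_length (x : X) (Sf : Finset ℕ) : (B.dsortL x Sf).length = Sf.card := by
  rw [(B.dsortL_perm x Sf).length_eq, Finset.length_sort]

lemma dsortL_pairwise (x : X) (Sf : Finset ℕ) :
    List.Pairwise (B.Desc x) (B.dsortL x Sf) := by
  have := List.pairwise_mergeSort (le := fun i j => decide (|B.coeff j x| ≤ |B.coeff i x|))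
    (fun a b c hab hbc => by
      simp only [decide_eq_true_eq] at *; exact le_trans hbc hab)
    (fun a b => by
      simp only [Bool.or_eq_true, decide_eq_true_eq]; exact le_total _ _)
    (Sf.sort (· ≤ ·))
  exact this.imp (fun h => by simpa [Desc] using h)

lemma dsortL_toFinset (x : X) (Sf : Finset ℕ) : (B.dsortL x Sf).toFinset = Sf := by
  ext k; rw [List.mem_toFinset, B.mem_dsortL]

variable {K : ℝ} (hK : B.QuasiGreedyWith K)
include hK

/-- partial sums along a sorted support-containing list are quasi-greedy bounded -/
lemma greedy_list_proj (x : X) (l : List ℕ) (hnd : l.Nodup)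
    (hp : List.Pairwise (B.Desc x) l)
    (hsupp : ∀ k, B.coeff k x ≠ 0 → k ∈ l) (m : ℕ) :
    ‖((l.take m).map (fun k => B.coeff k x • B.e k)).sum‖ ≤ K * ‖x‖ := by
  obtain ⟨π, hπ, hspec⟩ := B.exists_greedyPerm x l hnd hp hsupp
  set m' := min m l.length with hm'
  have hbound := (hK x π hπ m').1
  have heq : ((l.take m).map (fun k => B.coeff k x • B.e k)).sum = B.G π m' x := by
    rw [list_map_sum_range, G]
    have hlen : (l.take m).length = m' := by simp [hm']
    rw [hlen]
    refine Finset.sum_congr rfl fun i hi => ?_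
    have hi' : i < l.length := lt_of_lt_of_le (Finset.mem_range.mp hi) (min_le_right _ _)
    have h1 : (l.take m).getD i 0 = l.get ⟨i, hi'⟩ := by
      have hit : i < (l.take m).length := by rw [hlen]; exact Finset.mem_range.mp hi
      rw [List.getD_eq_getElem _ _ hit]
      simp [List.getElem_take]
    rw [h1, hspec i hi']
  rw [heq]; exact hbound

/-- greedy-set partial sums: for a greedy set `Λ` of `x` with finite support inside `A`,
partial sums along the sorted order of `Λ` are bounded -/
lemma greedy_sorted_partial (x : X) (A : Finset ℕ) (hA : ∀ k ∉ A, B.coeff k x = 0)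
    (Λ : Finset ℕ) (hΛ : B.IsGreedySet x Λ) (m : ℕ) :
    ‖(((B.dsortL x Λ).take m).map (fun k => B.coeff k x • B.e k)).sum‖ ≤ K * ‖x‖ := by
  classical
  set l1 := B.dsortL x Λ with hl1
  set l2 := B.dsortL x (A \ Λ) with hl2
  have hnd : (l1 ++ l2).Nodup := by
    rw [List.nodup_append]
    refine ⟨B.dsortL_nodup _ _, B.dsortL_nodup _ _, fun a ha b hb hab => ?_⟩
    rw [hl1, B.mem_dsortL] at ha
    rw [hl2, B.mem_dsortL, Finset.mem_sdiff] at hb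
    exact hb.2 (hab ▸ ha)
  have hp : List.Pairwise (B.Desc x) (l1 ++ l2) := by
    rw [List.pairwise_append]
    refine ⟨B.dsortL_pairwise _ _, B.dsortL_pairwise _ _, fun a ha b hb => ?_⟩
    rw [hl1, B.mem_dsortL] at ha
    rw [hl2, B.mem_dsortL, Finset.mem_sdiff] at hb
    exact hΛ a ha b hb.2
  have hsupp : ∀ k, B.coeff k x ≠ 0 → k ∈ l1 ++ l2 := by
    intro k hk
    rw [List.mem_append, hl1, hl2, B.mem_dsortL, B.mem_dsortL, Finset.mem_sdiff]
    by_cases h : k ∈ Λ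
    · exact Or.inl h
    · exact Or.inr ⟨by_contra fun hc => hk (hA k hc), h⟩
  have key := B.greedy_list_proj hK x (l1 ++ l2) hnd hp hsupp m
  by_cases hm : m ≤ l1.length
  · rwa [List.take_append, Nat.sub_eq_zero_of_le hm, List.take_zero,
      List.append_nil] at key
  · have h1 : l1.take m = l1 := List.take_of_length_le (by omega)
    have h2 := B.greedy_list_proj hK x (l1 ++ l2) hnd hp hsupp l1.length
    rw [List.take_append, Nat.sub_self, List.take_zero, List.append_nil,
      List.take_length] at h2
    rwa [h1]

/-- projection on a greedy set is bounded -/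
lemma greedy_set_proj (x : X) (A : Finset ℕ) (hA : ∀ k ∉ A, B.coeff k x = 0)
    (Λ : Finset ℕ) (hΛ : B.IsGreedySet x Λ) :
    ‖B.S Λ x‖ ≤ K * ‖x‖ := by
  have key := B.greedy_sorted_partial hK x A hA Λ hΛ (B.dsortL x Λ).length
  rw [List.take_length] at key
  have : B.S Λ x = ((B.dsortL x Λ).map (fun k => B.coeff k x • B.e k)).sum := by
    rw [S, ← B.dsortL_toFinset x Λ, list_sum_toFinset _ (B.dsortL_nodup x Λ)]
    rw [B.dsortL_toFinset]
  rwa [this]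

lemma hK1 : 1 ≤ K := by
  have hgp : B.IsGreedyPerm (B.e 0) id := by
    refine ⟨Function.bijective_id, fun k => ?_⟩
    simp only [id_eq, B.coeff_e]
    by_cases h : k = 0
    · subst h; norm_num
    · simp [h]
  have h1 := (hK (B.e 0) id hgp 1).1
  have hG : B.G id 1 (B.e 0) = B.e 0 := by
    simp [G, B.coeff_e]
  rw [hG] at h1
  have he : 0 < ‖B.e 0‖ := lt_of_lt_of_le B.c_norm_pos (B.norm_e_ge 0)
  nlinarith

lemma hK0 : 0 < K := lt_of_lt_of_le one_pos (B.hK1 hK)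

lemma coeff_bound_fin (x : X) (A : Finset ℕ) (hA : ∀ k ∉ A, B.coeff k x = 0) (k : ℕ) :
    B.c_norm * |B.coeff k x| ≤ 2 * K * ‖x‖ := by
  classical
  by_cases hzero : B.coeff k x = 0
  · rw [hzero]
    simp only [abs_zero, mul_zero]
    have hKpos := B.hK0 hK
    have := norm_nonneg x
    nlinarith
  set Λ : Finset ℕ := insert k (A.filter fun j => |B.coeff k x| ≤ |B.coeff j x|) with hΛdef
  have hkΛ : k ∈ Λ := Finset.mem_insert_self _ _
  have houtside : ∀ i ∉ Λ, |B.coeff i x| ≤ |B.coeff k x| := by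
    intro i hi
    by_cases hiA : i ∈ A
    · by_contra hc
      push_neg at hc
      exact hi (Finset.mem_insert_of_mem (Finset.mem_filter.mpr ⟨hiA, le_of_lt hc⟩))
    · rw [hA i hiA]; simp [abs_nonneg]
  have hinside : ∀ j ∈ Λ, |B.coeff k x| ≤ |B.coeff j x| := by
    intro j hj
    rcases Finset.mem_insert.mp hj with h | h
    · subst h; exact le_refl _
    · exact (Finset.mem_filter.mp h).2
  have hgr1 : B.IsGreedySet x Λ := fun j hj i hi => le_trans (houtside i hi) (hinside j hj)
  have hgr2 : B.IsGreedySet x (Λ.erase k) := by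
    intro j hj i hi
    have hjΛ := Finset.mem_of_mem_erase hj
    have hjk := Finset.ne_of_mem_erase hj
    by_cases hik : i = k
    · subst hik; exact hinside j hjΛ
    · by_cases hiΛ : i ∈ Λ
      · exact absurd (Finset.mem_erase.mpr ⟨hik, hiΛ⟩) hi
      · exact le_trans (houtside i hiΛ) (hinside j hjΛ)
  have h1 := B.greedy_set_proj hK x (insert k A) (fun j hj => hA j (fun hjA => hj (Finset.mem_insert_of_mem hjA))) Λ hgr1
  have h2 := B.greedy_set_proj hK x (insert k A) (fun j hj => hA j (fun hjA => hj (Finset.mem_insert_of_mem hjA))) (Λ.erase k) hgr2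
  have hsplit : B.coeff k x • B.e k = B.S Λ x - B.S (Λ.erase k) x := by
    rw [S, S, ← Finset.add_sum_erase _ _ hkΛ]
    abel
  have hnorm : B.c_norm * |B.coeff k x| ≤ ‖B.coeff k x • B.e k‖ := by
    rw [norm_smul, Real.norm_eq_abs, mul_comm]
    exact mul_le_mul_of_nonneg_left (B.norm_e_ge k) (abs_nonneg _)
  calc B.c_norm * |B.coeff k x| ≤ ‖B.coeff k x • B.e k‖ := hnorm
    _ = ‖B.S Λ x - B.S (Λ.erase k) x‖ := by rw [hsplit]
    _ ≤ ‖B.S Λ x‖ + ‖B.S (Λ.erase k) x‖ := norm_sub_le _ _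
    _ ≤ K * ‖x‖ + K * ‖x‖ := add_le_add h1 h2
    _ = 2 * K * ‖x‖ := by ring

lemma coeff_bound (x : X) (k : ℕ) :
    B.c_norm * |B.coeff k x| ≤ 2 * K * ‖x‖ := by
  have key : ∀ M, k < M →
      B.c_norm * |B.coeff k x| ≤ 2 * K * ‖∑ j ∈ Finset.range M, B.coeff j x • B.e j‖ := by
    intro M hM
    set y := ∑ j ∈ Finset.range M, B.coeff j x • B.e j with hy
    have hA : ∀ j ∉ Finset.range M, B.coeff j y = 0 := by
      intro j hj
      rw [hy, B.aux_coeff_S, if_neg hj]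
    have hck : B.coeff k y = B.coeff k x := by
      rw [hy, B.aux_coeff_S, if_pos (Finset.mem_range.mpr hM)]
    have := B.coeff_bound_fin hK y (Finset.range M) hA k
    rwa [hck] at this
  have htend : Tendsto (fun M => 2 * K * ‖∑ j ∈ Finset.range M, B.coeff j x • B.e j‖)
      atTop (nhds (2 * K * ‖x‖)) := ((B.expansion x).norm).const_mul _
  refine ge_of_tendsto htend ?_
  filter_upwards [eventually_gt_atTop k] with M hM using key M hM

omit hK

lemma hr_set_nonempty (N : ℕ) :
    {r | ∃ Γ : Finset ℕ, Γ.card = N ∧ r = ‖∑ k ∈ Γ, B.e k‖}.Nonempty :=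
  ⟨‖∑ k ∈ Finset.range N, B.e k‖, Finset.range N, Finset.card_range N, rfl⟩

lemma hr_bddAbove (N : ℕ) :
    BddAbove {r | ∃ Γ : Finset ℕ, Γ.card = N ∧ r = ‖∑ k ∈ Γ, B.e k‖} := by
  refine ⟨N * B.C_norm, fun r hr => ?_⟩
  obtain ⟨Γ, hΓ, rfl⟩ := hr
  calc ‖∑ k ∈ Γ, B.e k‖ ≤ ∑ k ∈ Γ, ‖B.e k‖ := norm_sum_le _ _
    _ ≤ ∑ _k ∈ Γ, B.C_norm := Finset.sum_le_sum fun k _ => B.norm_e_le k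
    _ = N * B.C_norm := by rw [Finset.sum_const, hΓ, nsmul_eq_mul]

lemma le_hr {N : ℕ} (Γ : Finset ℕ) (hΓ : Γ.card = N) : ‖∑ k ∈ Γ, B.e k‖ ≤ B.hr N :=
  le_csSup (B.hr_bddAbove N) ⟨Γ, hΓ, rfl⟩

lemma hr_le {N : ℕ} {b : ℝ} (h : ∀ Γ : Finset ℕ, Γ.card = N → ‖∑ k ∈ Γ, B.e k‖ ≤ b) :
    B.hr N ≤ b :=
  csSup_le (B.hr_set_nonempty N) (fun r hr => by obtain ⟨Γ, hΓ, rfl⟩ := hr; exact h Γ hΓ)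

lemma hr_nonneg (N : ℕ) : 0 ≤ B.hr N :=
  le_trans (norm_nonneg _) (B.le_hr (Finset.range N) (Finset.card_range N))

lemma hl_le {N : ℕ} (Γ : Finset ℕ) (hΓ : Γ.card = N) : B.hl N ≤ ‖∑ k ∈ Γ, B.e k‖ :=
  csInf_le ⟨0, fun r hr => by obtain ⟨Γ', _, rfl⟩ := hr; exact norm_nonneg _⟩ ⟨Γ, hΓ, rfl⟩

lemma le_hl {N : ℕ} {b : ℝ} (h : ∀ Γ : Finset ℕ, Γ.card = N → b ≤ ‖∑ k ∈ Γ, B.e k‖) :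
    b ≤ B.hl N :=
  le_csInf (B.hr_set_nonempty N) (fun r hr => by obtain ⟨Γ, hΓ, rfl⟩ := hr; exact h Γ hΓ)

lemma hl_nonneg (N : ℕ) : 0 ≤ B.hl N :=
  B.le_hl (fun Γ _ => norm_nonneg _)

include hK

lemma hl_pos {N : ℕ} (hN : 1 ≤ N) : B.c_norm / (2 * K) ≤ B.hl N := by
  refine B.le_hl fun Γ hΓ => ?_
  obtain ⟨k, hk⟩ := Finset.card_pos.mp (hΓ ▸ hN)
  have hz : ∑ j ∈ Γ, B.e j = ∑ j ∈ Γ, (1 : ℝ) • B.e j := by simp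
  have hcoeff : B.coeff k (∑ j ∈ Γ, B.e j) = 1 := by
    rw [hz, B.aux_coeff_S, if_pos hk]
  have := B.coeff_bound hK (∑ j ∈ Γ, B.e j) k
  rw [hcoeff] at this
  simp only [abs_one, mul_one] at this
  have hKpos := B.hK0 hK
  rw [div_le_iff₀ (by linarith : (0:ℝ) < 2 * K)]
  linarith

lemma proj_indicator {Γ Γ' : Finset ℕ} (h : Γ ⊆ Γ') :
    ‖∑ k ∈ Γ, B.e k‖ ≤ K * ‖∑ k ∈ Γ', B.e k‖ := by
  classical
  set z := ∑ j ∈ Γ', (1 : ℝ) • B.e j with hz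
  have hz' : ∑ j ∈ Γ', B.e j = z := by simp [hz]
  have hA : ∀ j ∉ Γ', B.coeff j z = 0 := fun j hj => by rw [hz, B.aux_coeff_S, if_neg hj]
  have hgr : B.IsGreedySet z Γ := by
    intro j hj i _
    rw [hz, B.aux_coeff_S, B.aux_coeff_S, if_pos (h hj)]
    by_cases hi : i ∈ Γ' <;> simp [hi]
  have hproj := B.greedy_set_proj hK z Γ' hA Γ hgr
  have hS : B.S Γ z = ∑ k ∈ Γ, B.e k := by
    rw [S]
    refine Finset.sum_congr rfl fun k hk => ?_
    rw [hz, B.aux_coeff_S, if_pos (h hk), one_smul]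
  rw [hS] at hproj
  simpa [hz] using hproj

lemma hr_qmono {n m : ℕ} (h : n ≤ m) : B.hr n ≤ K * B.hr m := by
  refine B.hr_le fun Γ hΓ => ?_
  have hcard : m ≤ (Γ ∪ Finset.range m).card :=
    le_trans (by rw [Finset.card_range]) (Finset.card_le_card Finset.subset_union_right)
  obtain ⟨u, hu1, _, hu3⟩ := Finset.exists_subsuperset_card_eq
    (Finset.subset_union_left (s₂ := Finset.range m)) (by omega) hcard
  calc ‖∑ k ∈ Γ, B.e k‖ ≤ K * ‖∑ k ∈ u, B.e k‖ := B.proj_indicator hK hu1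
    _ ≤ K * B.hr m := by
        exact mul_le_mul_of_nonneg_left (B.le_hr u hu3) (le_of_lt (B.hK0 hK))

lemma hl_qmono {n m : ℕ} (h : n ≤ m) : B.hl n ≤ K * B.hl m := by
  have hKpos := B.hK0 hK
  rw [← div_le_iff₀' hKpos]
  refine B.le_hl fun Γ' hΓ' => ?_
  obtain ⟨Γ, hΓsub, hΓcard⟩ := Finset.exists_subset_card_eq (s := Γ') (n := n) (by omega)
  rw [div_le_iff₀' hKpos]
  calc B.hl n ≤ ‖∑ k ∈ Γ, B.e k‖ := B.hl_le Γ hΓcard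
    _ ≤ K * ‖∑ k ∈ Γ', B.e k‖ := B.proj_indicator hK hΓsub

omit hK

lemma hr_subadd (m n : ℕ) : B.hr (m + n) ≤ B.hr m + B.hr n := by
  classical
  refine B.hr_le fun Γ hΓ => ?_
  obtain ⟨Γ1, hsub, hcard⟩ := Finset.exists_subset_card_eq (s := Γ) (n := m) (by omega)
  have hcard2 : (Γ \ Γ1).card = n := by
    rw [Finset.card_sdiff_of_subset hsub, hΓ, hcard]; omega
  have hsplit : ∑ k ∈ Γ, B.e k = ∑ k ∈ Γ1, B.e k + ∑ k ∈ Γ \ Γ1, B.e k := by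
    rw [add_comm, Finset.sum_sdiff hsub]
  rw [hsplit]
  exact le_trans (norm_add_le _ _) (add_le_add (B.le_hr Γ1 hcard) (B.le_hr _ hcard2))

lemma mu_set_eq (N : ℕ) :
    {r | ∃ k, 1 ≤ k ∧ k ≤ N ∧ r = B.hr k / B.hl k} =
      (fun k => B.hr k / B.hl k) '' (Set.Icc 1 N) := by
  ext r
  simp only [Set.mem_setOf_eq, Set.mem_image, Set.mem_Icc]
  constructor
  · rintro ⟨k, h1, h2, rfl⟩; exact ⟨k, ⟨h1, h2⟩, rfl⟩
  · rintro ⟨k, ⟨h1, h2⟩, rfl⟩; exact ⟨k, h1, h2, rfl⟩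

lemma mu_bddAbove (N : ℕ) :
    BddAbove {r | ∃ k, 1 ≤ k ∧ k ≤ N ∧ r = B.hr k / B.hl k} := by
  rw [B.mu_set_eq]
  exact ((Set.finite_Icc 1 N).image _).bddAbove

lemma ratio_le_mu {k N : ℕ} (h1 : 1 ≤ k) (h2 : k ≤ N) : B.hr k / B.hl k ≤ B.mu N :=
  le_csSup (B.mu_bddAbove N) ⟨k, h1, h2, rfl⟩

lemma mu_nonneg {N : ℕ} (hN : 1 ≤ N) : 0 ≤ B.mu N :=
  le_trans (div_nonneg (B.hr_nonneg 1) (B.hl_nonneg 1)) (B.ratio_le_mu le_rfl hN)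

lemma mu_mono {N M : ℕ} (hN : 1 ≤ N) (h : N ≤ M) : B.mu N ≤ B.mu M := by
  refine csSup_le_csSup (B.mu_bddAbove M) ⟨B.hr 1 / B.hl 1, 1, le_rfl, hN, rfl⟩ ?_
  rintro r ⟨k, h1, h2, rfl⟩
  exact ⟨k, h1, le_trans h2 h, rfl⟩

include hK

lemma mu_double {m : ℕ} (hm : 1 ≤ m) : B.mu (2 * m) ≤ (K * (1 + K)) * B.mu m := by
  have hKpos := B.hK0 hK
  have hK1' := B.hK1 hK
  have hD1 : (1:ℝ) ≤ K * (1 + K) := by nlinarith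
  have hmu0 := B.mu_nonneg hm
  refine csSup_le ⟨B.hr 1 / B.hl 1, 1, le_rfl, by omega, rfl⟩ ?_
  rintro r ⟨n, h1, h2, rfl⟩
  by_cases hcase : n ≤ m
  · calc B.hr n / B.hl n ≤ B.mu m := B.ratio_le_mu h1 hcase
      _ ≤ (K * (1 + K)) * B.mu m := le_mul_of_one_le_left hmu0 hD1
  · push_neg at hcase
    have h2K : (0:ℝ) < B.c_norm / (2 * K) := div_pos B.c_norm_pos (by linarith)
    have hlnpos : 0 < B.hl n := lt_of_lt_of_le h2K (B.hl_pos hK h1)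
    have hlmpos : 0 < B.hl m := lt_of_lt_of_le h2K (B.hl_pos hK hm)
    have hrn : B.hr n ≤ (1 + K) * B.hr m := by
      have h3 : n - m ≤ m := by omega
      have h4 : n = m + (n - m) := by omega
      calc B.hr n = B.hr (m + (n - m)) := by rw [← h4]
        _ ≤ B.hr m + B.hr (n - m) := B.hr_subadd _ _
        _ ≤ B.hr m + K * B.hr m := add_le_add_right (B.hr_qmono hK h3) _
        _ = (1 + K) * B.hr m := by ring
    have hln : B.hl m ≤ K * B.hl n := B.hl_qmono hK (le_of_lt hcase)
    have key : B.hr n * B.hl m ≤ (K * (1 + K) * B.hr m) * B.hl n := by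
      calc B.hr n * B.hl m ≤ ((1 + K) * B.hr m) * (K * B.hl n) := by
            apply mul_le_mul hrn hln (B.hl_nonneg m)
            have := B.hr_nonneg m
            nlinarith
        _ = (K * (1 + K) * B.hr m) * B.hl n := by ring
    calc B.hr n / B.hl n ≤ (K * (1 + K) * B.hr m) / B.hl m := by
          rw [div_le_div_iff₀ hlnpos hlmpos]; exact key
      _ = (K * (1 + K)) * (B.hr m / B.hl m) := by ring
      _ ≤ (K * (1 + K)) * B.mu m :=
          mul_le_mul_of_nonneg_left (B.ratio_le_mu hm le_rfl) (by nlinarith)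

omit hK

lemma sign_mul_abs (r : ℝ) : Real.sign r * |r| = r := by
  rcases lt_trichotomy r 0 with h | h | h
  · rw [Real.sign_of_neg h, abs_of_neg h]; ring
  · simp [h]
  · rw [Real.sign_of_pos h, abs_of_pos h]; ring

lemma hr_zero : B.hr 0 = 0 := by
  have h1 : B.hr 0 ≤ 0 := B.hr_le fun Γ hΓ => by
    rw [Finset.card_eq_zero.mp hΓ]; simp
  exact le_antisymm h1 (B.hr_nonneg 0)

lemma take_succ_sum {M : Type*} [AddCommMonoid M] (l : List ℕ) (f : ℕ → M) (m : ℕ)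
    (h : m < l.length) :
    ((l.take (m+1)).map f).sum = ((l.take m).map f).sum + f (l.getD m 0) := by
  rw [← List.take_concat_get h, List.concat_eq_append, List.map_append, List.sum_append,
    List.getD_eq_getElem l 0 h]
  simp

include hK

lemma sign_sum_bound (x : X) (l : List ℕ) (hnd : l.Nodup) (m : ℕ) :
    ‖((l.take m).map (fun k => Real.sign (B.coeff k x) • B.e k)).sum‖
      ≤ 2 * (K * B.hr l.length) := by
  classical
  set lt := l.take m with hlt
  have hndt : lt.Nodup := hnd.sublist (List.take_sublist _ _)
  have hconv : ((lt.map (fun k => Real.sign (B.coeff k x) • B.e k))).sum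
      = ∑ k ∈ lt.toFinset, Real.sign (B.coeff k x) • B.e k :=
    (list_sum_toFinset lt hndt _).symm
  set T := lt.toFinset with hT
  have hsplit : ∑ k ∈ T, Real.sign (B.coeff k x) • B.e k
      = ∑ k ∈ T.filter (fun k => 0 < B.coeff k x), B.e k
        - ∑ k ∈ T.filter (fun k => B.coeff k x < 0), B.e k := by
    have h1 : ∀ k ∈ T, Real.sign (B.coeff k x) • B.e k
        = (if 0 < B.coeff k x then B.e k else 0) - (if B.coeff k x < 0 then B.e k else 0) := by
      intro k _
      rcases lt_trichotomy (B.coeff k x) 0 with h | h | h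
      · rw [if_neg (lt_asymm h), if_pos h, Real.sign_of_neg h]; simp
      · rw [if_neg (by rw [h]; exact lt_irrefl 0), if_neg (by rw [h]; exact lt_irrefl 0),
          h, Real.sign_zero]; simp
      · rw [if_pos h, if_neg (lt_asymm h), Real.sign_of_pos h]; simp
    rw [Finset.sum_congr rfl h1, Finset.sum_sub_distrib, ← Finset.sum_filter, ← Finset.sum_filter]
  have hTcard : T.card ≤ l.length := by
    rw [hT, List.toFinset_card_of_nodup hndt, hlt]
    rw [List.length_take]
    exact min_le_right _ _
  have hb1 : ‖∑ k ∈ T.filter (fun k => 0 < B.coeff k x), B.e k‖ ≤ K * B.hr l.length :=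
    le_trans (B.le_hr _ rfl)
      (B.hr_qmono hK (le_trans (Finset.card_filter_le _ _) hTcard))
  have hb2 : ‖∑ k ∈ T.filter (fun k => B.coeff k x < 0), B.e k‖ ≤ K * B.hr l.length :=
    le_trans (B.le_hr _ rfl)
      (B.hr_qmono hK (le_trans (Finset.card_filter_le _ _) hTcard))
  calc ‖((lt.map (fun k => Real.sign (B.coeff k x) • B.e k))).sum‖
      = ‖∑ k ∈ T.filter (fun k => 0 < B.coeff k x), B.e k
          - ∑ k ∈ T.filter (fun k => B.coeff k x < 0), B.e k‖ := by rw [hconv, hsplit]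
    _ ≤ ‖∑ k ∈ T.filter (fun k => 0 < B.coeff k x), B.e k‖
          + ‖∑ k ∈ T.filter (fun k => B.coeff k x < 0), B.e k‖ := norm_sub_le _ _
    _ ≤ 2 * (K * B.hr l.length) := by linarith

/-- upper estimate -/
lemma upper_est (x : X) (l : List ℕ) (hnd : l.Nodup)
    (hp : List.Pairwise (B.Desc x) l) (s : ℝ) (hs : ∀ k ∈ l, |B.coeff k x| ≤ s) :
    ‖(l.map fun k => B.coeff k x • B.e k).sum‖ ≤ s * (2 * (K * B.hr l.length)) := by
  rcases Nat.eq_zero_or_pos l.length with h0 | hpos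
  · rw [List.length_eq_zero_iff.mp h0]
    simp [B.hr_zero]
  set n := l.length with hn
  set b : ℕ → ℝ := fun i => B.coeff (l.getD i 0) x with hb
  set P : ℕ → X := fun m => ((l.take m).map fun k => B.coeff k x • B.e k).sum with hP
  set Q : ℕ → X := fun m => ((l.take m).map fun k => Real.sign (B.coeff k x) • B.e k).sum with hQ
  set MQ : ℝ := 2 * (K * B.hr n) with hMQ
  have hQle : ∀ m, ‖Q m‖ ≤ MQ := fun m => B.sign_sum_bound hK x l hnd m
  have hMQ0 : 0 ≤ MQ := le_trans (norm_nonneg (Q 0)) (hQle 0)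
  have hgd : ∀ i, i < n → l.getD i 0 ∈ l := by
    intro i hi
    rw [List.getD_eq_getElem l 0 hi]
    exact List.getElem_mem _
  have hdesc : ∀ i j, i ≤ j → j < n → |b j| ≤ |b i| := by
    intro i j hij hj
    rcases eq_or_lt_of_le hij with rfl | hlt
    · exact le_refl _
    · have hi : i < n := by omega
      have h2 := List.pairwise_iff_get.mp hp ⟨i, hi⟩ ⟨j, hj⟩ hlt
      simp only [Desc] at h2
      show |B.coeff (l.getD j 0) x| ≤ |B.coeff (l.getD i 0) x|
      rw [List.getD_eq_getElem l 0 hj, List.getD_eq_getElem l 0 hi]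
      simpa [List.get_eq_getElem] using h2
  have hPq : ∀ m, m < n → P (m+1) = P m + B.coeff (l.getD m 0) x • B.e (l.getD m 0) :=
    fun m hm => take_succ_sum l _ m hm
  have hQs : ∀ m, m < n → Q (m+1) = Q m + Real.sign (B.coeff (l.getD m 0) x) • B.e (l.getD m 0) :=
    fun m hm => take_succ_sum l _ m hm
  have claim : ∀ m, 1 ≤ m → m ≤ n → ‖P m - |b (m-1)| • Q m‖ ≤ (|b 0| - |b (m-1)|) * MQ := by
    intro m hm1
    induction m, hm1 using Nat.le_induction with
    | base =>
        intro h1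
        have h0 : (0:ℕ) < n := by omega
        have hP1 : P 1 = B.coeff (l.getD 0 0) x • B.e (l.getD 0 0) := by
          rw [hPq 0 h0]; simp [hP]
        have hQ1 : Q 1 = Real.sign (B.coeff (l.getD 0 0) x) • B.e (l.getD 0 0) := by
          rw [hQs 0 h0]; simp [hQ]
        rw [hP1, hQ1]
        have hz : B.coeff (l.getD 0 0) x • B.e (l.getD 0 0)
            - |b 0| • Real.sign (B.coeff (l.getD 0 0) x) • B.e (l.getD 0 0) = 0 := by
          rw [smul_smul, ← sub_smul]
          have h2 := sign_mul_abs (B.coeff (l.getD 0 0) x)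
          have h3 : B.coeff (l.getD 0 0) x
              - |b 0| * Real.sign (B.coeff (l.getD 0 0) x) = 0 := by
            show B.coeff (l.getD 0 0) x
              - |B.coeff (l.getD 0 0) x| * Real.sign (B.coeff (l.getD 0 0) x) = 0
            nlinarith [h2]
          rw [h3, zero_smul]
        rw [hz]
        simp
    | succ m hm ih =>
        intro hmn
        have hmln : m < n := by omega
        have hz : B.coeff (l.getD m 0) x • B.e (l.getD m 0)
            - |b m| • Real.sign (B.coeff (l.getD m 0) x) • B.e (l.getD m 0) = 0 := by
          rw [smul_smul, ← sub_smul]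
          have h2 := sign_mul_abs (B.coeff (l.getD m 0) x)
          have h3 : B.coeff (l.getD m 0) x
              - |b m| * Real.sign (B.coeff (l.getD m 0) x) = 0 := by
            show B.coeff (l.getD m 0) x
              - |B.coeff (l.getD m 0) x| * Real.sign (B.coeff (l.getD m 0) x) = 0
            nlinarith [h2]
          rw [h3, zero_smul]
        have hkey : P (m+1) - |b ((m+1)-1)| • Q (m+1)
            = (P m - |b (m-1)| • Q m) + (|b (m-1)| - |b m|) • Q m := by
          have h4 : (m+1) - 1 = m := by omega
          rw [h4, hPq m hmln, hQs m hmln]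
          have hexp : P m + B.coeff (l.getD m 0) x • B.e (l.getD m 0)
              - |b m| • (Q m + Real.sign (B.coeff (l.getD m 0) x) • B.e (l.getD m 0))
              = (P m - |b m| • Q m) + (B.coeff (l.getD m 0) x • B.e (l.getD m 0)
                - |b m| • Real.sign (B.coeff (l.getD m 0) x) • B.e (l.getD m 0)) := by
            rw [smul_add]; abel
          rw [hexp, hz, add_zero, sub_smul]
          abel
        rw [hkey]
        have hble : |b m| ≤ |b (m-1)| := hdesc (m-1) m (by omega) hmln
        have h5 : (m+1) - 1 = m := by omega
        rw [h5]
        calc ‖(P m - |b (m-1)| • Q m) + (|b (m-1)| - |b m|) • Q m‖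
            ≤ ‖P m - |b (m-1)| • Q m‖ + ‖(|b (m-1)| - |b m|) • Q m‖ := norm_add_le _ _
          _ ≤ (|b 0| - |b (m-1)|) * MQ + (|b (m-1)| - |b m|) * MQ := by
              refine add_le_add (ih (by omega)) ?_
              rw [norm_smul, Real.norm_eq_abs, abs_of_nonneg (by linarith)]
              exact mul_le_mul_of_nonneg_left (hQle m) (by linarith)
          _ = (|b 0| - |b m|) * MQ := by ring
  have hfin := claim n hpos le_rfl
  have hPn : P n = (l.map fun k => B.coeff k x • B.e k).sum := by
    rw [hP]
    simp only [hn]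
    rw [List.take_length]
  have hb0s : |b 0| ≤ s := hs _ (hgd 0 hpos)
  have hbn0 : 0 ≤ |b (n-1)| := abs_nonneg _
  calc ‖(l.map fun k => B.coeff k x • B.e k).sum‖ = ‖P n‖ := by rw [hPn]
    _ = ‖(P n - |b (n-1)| • Q n) + |b (n-1)| • Q n‖ := by rw [sub_add_cancel]
    _ ≤ ‖P n - |b (n-1)| • Q n‖ + ‖|b (n-1)| • Q n‖ := norm_add_le _ _
    _ ≤ (|b 0| - |b (n-1)|) * MQ + |b (n-1)| * MQ := by
        refine add_le_add hfin ?_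
        rw [norm_smul, Real.norm_eq_abs, abs_abs]
        exact mul_le_mul_of_nonneg_left (hQle n) hbn0
    _ = |b 0| * MQ := by ring
    _ ≤ s * MQ := mul_le_mul_of_nonneg_right hb0s hMQ0

omit hK
lemma abs_sign_le (r : ℝ) : |Real.sign r| ≤ 1 := by
  rcases Real.sign_apply_eq r with h | h | h <;> rw [h] <;> norm_num
include hK

/-- truncation estimate -/
lemma trunc_est (x : X) (l : List ℕ) (hnd : l.Nodup) (hp : List.Pairwise (B.Desc x) l)
    (M : ℝ) (hM : ∀ m, ‖((l.take m).map fun k => B.coeff k x • B.e k).sum‖ ≤ M)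
    (t : ℝ) (ht : 0 < t) (htl : ∀ k ∈ l, t ≤ |B.coeff k x|) :
    t * ‖(l.map fun k => Real.sign (B.coeff k x) • B.e k).sum‖ ≤ 2 * M := by
  have hM0 : 0 ≤ M := le_trans (norm_nonneg _) (hM 0)
  rcases Nat.eq_zero_or_pos l.length with h0 | hpos
  · rw [List.length_eq_zero_iff.mp h0]
    simp only [List.map_nil, List.sum_nil, norm_zero, mul_zero]
    linarith
  set n := l.length with hn
  set b : ℕ → ℝ := fun i => B.coeff (l.getD i 0) x with hb
  set P : ℕ → X := fun m => ((l.take m).map fun k => B.coeff k x • B.e k).sum with hP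
  set Q : ℕ → X := fun m => ((l.take m).map fun k => Real.sign (B.coeff k x) • B.e k).sum with hQ
  have hgd : ∀ i, i < n → l.getD i 0 ∈ l := by
    intro i hi
    rw [List.getD_eq_getElem l 0 hi]
    exact List.getElem_mem _
  have hbt : ∀ i, i < n → t ≤ |b i| := fun i hi => htl _ (hgd i hi)
  have hbpos : ∀ i, i < n → 0 < |b i| := fun i hi => lt_of_lt_of_le ht (hbt i hi)
  have hdesc : ∀ i j, i ≤ j → j < n → |b j| ≤ |b i| := by
    intro i j hij hj
    rcases eq_or_lt_of_le hij with rfl | hlt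
    · exact le_refl _
    · have hi : i < n := by omega
      have h2 := List.pairwise_iff_get.mp hp ⟨i, hi⟩ ⟨j, hj⟩ hlt
      simp only [Desc] at h2
      show |B.coeff (l.getD j 0) x| ≤ |B.coeff (l.getD i 0) x|
      rw [List.getD_eq_getElem l 0 hj, List.getD_eq_getElem l 0 hi]
      simpa [List.get_eq_getElem] using h2
  have hPq : ∀ m, m < n → P (m+1) = P m + B.coeff (l.getD m 0) x • B.e (l.getD m 0) :=
    fun m hm => take_succ_sum l _ m hm
  have hQs : ∀ m, m < n → Q (m+1) = Q m + Real.sign (B.coeff (l.getD m 0) x) • B.e (l.getD m 0) :=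
    fun m hm => take_succ_sum l _ m hm
  have hzero : ∀ m, m < n → Real.sign (B.coeff (l.getD m 0) x) • B.e (l.getD m 0)
      - (|b m|)⁻¹ • B.coeff (l.getD m 0) x • B.e (l.getD m 0) = 0 := by
    intro m hm
    rw [smul_smul, ← sub_smul]
    have scal : ∀ c : ℝ, c ≠ 0 → Real.sign c - (|c|)⁻¹ * c = 0 := by
      intro c hc
      have h2 := sign_mul_abs c
      have h3 : |c| ≠ 0 := abs_ne_zero.mpr hc
      field_simp
      nlinarith [h2]
    have hcne : B.coeff (l.getD m 0) x ≠ 0 := by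
      have := hbt m hm
      intro hcontra
      show False
      rw [show b m = B.coeff (l.getD m 0) x from rfl] at this
      rw [hcontra] at this
      simp at this
      linarith
    have h4 := scal (B.coeff (l.getD m 0) x) hcne
    rw [show (|b m|)⁻¹ = (|B.coeff (l.getD m 0) x|)⁻¹ from rfl, h4, zero_smul]
  have claim : ∀ m, 1 ≤ m → m ≤ n →
      ‖Q m - (|b (m-1)|)⁻¹ • P m‖ ≤ ((|b (m-1)|)⁻¹ - (|b 0|)⁻¹) * M := by
    intro m hm1
    induction m, hm1 using Nat.le_induction with
    | base =>
        intro h1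
        have h0 : (0:ℕ) < n := by omega
        have hP1 : P 1 = B.coeff (l.getD 0 0) x • B.e (l.getD 0 0) := by
          rw [hPq 0 h0]; simp [hP]
        have hQ1 : Q 1 = Real.sign (B.coeff (l.getD 0 0) x) • B.e (l.getD 0 0) := by
          rw [hQs 0 h0]; simp [hQ]
        rw [hP1, hQ1]
        rw [hzero 0 h0]
        simp
    | succ m hm ih =>
        intro hmn
        have hmln : m < n := by omega
        have hkey : Q (m+1) - (|b ((m+1)-1)|)⁻¹ • P (m+1)
            = (Q m - (|b (m-1)|)⁻¹ • P m) + ((|b (m-1)|)⁻¹ - (|b m|)⁻¹) • P m := by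
          have h4 : (m+1) - 1 = m := by omega
          rw [h4, hPq m hmln, hQs m hmln]
          have hexp : Q m + Real.sign (B.coeff (l.getD m 0) x) • B.e (l.getD m 0)
              - (|b m|)⁻¹ • (P m + B.coeff (l.getD m 0) x • B.e (l.getD m 0))
              = (Q m - (|b m|)⁻¹ • P m) + (Real.sign (B.coeff (l.getD m 0) x) • B.e (l.getD m 0)
                - (|b m|)⁻¹ • B.coeff (l.getD m 0) x • B.e (l.getD m 0)) := by
            rw [smul_add]; abel
          rw [hexp, hzero m hmln, add_zero, sub_smul]
          abel
        rw [hkey]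
        have hble : |b m| ≤ |b (m-1)| := hdesc (m-1) m (by omega) hmln
        have hinv : (|b (m-1)|)⁻¹ ≤ (|b m|)⁻¹ :=
          one_div (|b (m-1)|) ▸ one_div (|b m|) ▸
            one_div_le_one_div_of_le (hbpos m hmln) hble
        have h5 : (m+1) - 1 = m := by omega
        rw [h5]
        calc ‖(Q m - (|b (m-1)|)⁻¹ • P m) + ((|b (m-1)|)⁻¹ - (|b m|)⁻¹) • P m‖
            ≤ ‖Q m - (|b (m-1)|)⁻¹ • P m‖ + ‖((|b (m-1)|)⁻¹ - (|b m|)⁻¹) • P m‖ :=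
              norm_add_le _ _
          _ ≤ ((|b (m-1)|)⁻¹ - (|b 0|)⁻¹) * M + ((|b m|)⁻¹ - (|b (m-1)|)⁻¹) * M := by
              refine add_le_add (ih (by omega)) ?_
              rw [norm_smul, Real.norm_eq_abs, abs_sub_comm,
                abs_of_nonneg (by linarith)]
              exact mul_le_mul_of_nonneg_left (hM m) (by linarith)
          _ = ((|b m|)⁻¹ - (|b 0|)⁻¹) * M := by ring
  have hfin := claim n hpos le_rfl
  have hQn : Q n = (l.map fun k => Real.sign (B.coeff k x) • B.e k).sum := by
    rw [hQ]
    simp only [hn]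
    rw [List.take_length]
  have hb00 : 0 < |b 0| := hbpos 0 hpos
  have hbn : 0 < |b (n-1)| := hbpos (n-1) (by omega)
  have hQbound : ‖Q n‖ ≤ 2 * (|b (n-1)|)⁻¹ * M := by
    have h6 : 0 ≤ (|b 0|)⁻¹ := le_of_lt (inv_pos.mpr hb00)
    calc ‖Q n‖ = ‖(Q n - (|b (n-1)|)⁻¹ • P n) + (|b (n-1)|)⁻¹ • P n‖ := by rw [sub_add_cancel]
      _ ≤ ‖Q n - (|b (n-1)|)⁻¹ • P n‖ + ‖(|b (n-1)|)⁻¹ • P n‖ := norm_add_le _ _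
      _ ≤ ((|b (n-1)|)⁻¹ - (|b 0|)⁻¹) * M + (|b (n-1)|)⁻¹ * M := by
          refine add_le_add hfin ?_
          rw [norm_smul, Real.norm_eq_abs, abs_of_nonneg (le_of_lt (inv_pos.mpr hbn))]
          exact mul_le_mul_of_nonneg_left (hM n) (le_of_lt (inv_pos.mpr hbn))
      _ ≤ 2 * (|b (n-1)|)⁻¹ * M := by nlinarith
  have hinvt : (|b (n-1)|)⁻¹ ≤ t⁻¹ :=
    one_div (|b (n-1)|) ▸ one_div t ▸ one_div_le_one_div_of_le ht (hbt (n-1) (by omega))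
  calc t * ‖(l.map fun k => Real.sign (B.coeff k x) • B.e k).sum‖ = t * ‖Q n‖ := by rw [hQn]
    _ ≤ t * (2 * t⁻¹ * M) := by
        refine mul_le_mul_of_nonneg_left (le_trans hQbound ?_) (le_of_lt ht)
        nlinarith
    _ = 2 * M := by field_simp

/-- level set bound: `t ⬝ hl(m) ≤ 4 K³ ‖x‖` -/
lemma tbound (x : X) (A : Finset ℕ) (hA : ∀ k ∉ A, B.coeff k x = 0)
    (t : ℝ) (ht : 0 < t) (G : Finset ℕ) (hG : ∀ k ∈ G, t ≤ |B.coeff k x|)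
    (m : ℕ) (hGc : m ≤ G.card) :
    t * B.hl m ≤ 4 * K^3 * ‖x‖ := by
  classical
  have hKpos := B.hK0 hK
  have hK1' := B.hK1 hK
  set Λ := A.filter (fun k => t ≤ |B.coeff k x|) with hΛ
  have hGΛ : G ⊆ Λ := by
    intro k hk
    have h1 : t ≤ |B.coeff k x| := hG k hk
    have h2 : k ∈ A := by
      by_contra h3
      rw [hA k h3] at h1
      simp at h1
      linarith
    exact Finset.mem_filter.mpr ⟨h2, h1⟩
  have hΛgr : B.IsGreedySet x Λ := by
    intro j hj i hi
    have hjt : t ≤ |B.coeff j x| := (Finset.mem_filter.mp hj).2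
    by_cases hiA : i ∈ A
    · have : ¬ t ≤ |B.coeff i x| := fun hc => hi (Finset.mem_filter.mpr ⟨hiA, hc⟩)
      linarith [not_le.mp this]
    · rw [hA i hiA]
      simp only [abs_zero]
      linarith [abs_nonneg (B.coeff j x)]
  set l := B.dsortL x Λ with hldef
  have hM : ∀ m', ‖((l.take m').map fun k => B.coeff k x • B.e k).sum‖ ≤ K * ‖x‖ :=
    fun m' => B.greedy_sorted_partial hK x A hA Λ hΛgr m'
  have htl : ∀ k ∈ l, t ≤ |B.coeff k x| := by
    intro k hk
    rw [hldef, B.mem_dsortL] at hk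
    exact (Finset.mem_filter.mp hk).2
  have htrunc := B.trunc_est hK x l (B.dsortL_nodup x Λ) (B.dsortL_pairwise x Λ)
    (K * ‖x‖) hM t ht htl
  set z := ∑ k ∈ Λ, Real.sign (B.coeff k x) • B.e k with hzdef
  have hlz : (l.map fun k => Real.sign (B.coeff k x) • B.e k).sum = z := by
    rw [hzdef, ← B.dsortL_toFinset x Λ, list_sum_toFinset _ (B.dsortL_nodup x Λ)]
  rw [hlz] at htrunc
  -- coefficients of z
  have hcz : ∀ j, B.coeff j z = if j ∈ Λ then Real.sign (B.coeff j x) else 0 := by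
    intro j
    rw [hzdef, B.aux_coeff_S]
  have hzA : ∀ j ∉ Λ, B.coeff j z = 0 := fun j hj => by rw [hcz j, if_neg hj]
  have hne : ∀ k ∈ Λ, B.coeff k x ≠ 0 := by
    intro k hk hc
    have := (Finset.mem_filter.mp hk).2
    rw [hc] at this
    simp at this
    linarith
  set Λp := Λ.filter (fun k => 0 < B.coeff k x) with hΛp
  set Λn := Λ.filter (fun k => B.coeff k x < 0) with hΛn
  have habs1 : ∀ k ∈ Λ, |B.coeff k z| = 1 := by
    intro k hk
    rw [hcz k, if_pos hk]
    rcases Real.sign_apply_eq_of_ne_zero _ (hne k hk) with h | h <;> rw [h] <;> norm_num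
  have hgrp : B.IsGreedySet z Λp := by
    intro j hj i hi
    have hj1 : |B.coeff j z| = 1 := habs1 j (Finset.filter_subset _ _ hj)
    rw [hj1, hcz i]
    by_cases hiΛ : i ∈ Λ
    · rw [if_pos hiΛ]; exact abs_sign_le _
    · rw [if_neg hiΛ]; norm_num
  have hgrn : B.IsGreedySet z Λn := by
    intro j hj i hi
    have hj1 : |B.coeff j z| = 1 := habs1 j (Finset.filter_subset _ _ hj)
    rw [hj1, hcz i]
    by_cases hiΛ : i ∈ Λ
    · rw [if_pos hiΛ]; exact abs_sign_le _
    · rw [if_neg hiΛ]; norm_num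
  have hp1 := B.greedy_set_proj hK z Λ hzA Λp hgrp
  have hp2 := B.greedy_set_proj hK z Λ hzA Λn hgrn
  have hSp : B.S Λp z = ∑ k ∈ Λp, B.e k := by
    rw [S]
    refine Finset.sum_congr rfl fun k hk => ?_
    rw [hcz k, if_pos (Finset.filter_subset _ _ hk),
      Real.sign_of_pos (Finset.mem_filter.mp hk).2, one_smul]
  have hSn : B.S Λn z = -∑ k ∈ Λn, B.e k := by
    rw [S, ← Finset.sum_neg_distrib]
    refine Finset.sum_congr rfl fun k hk => ?_
    rw [hcz k, if_pos (Finset.filter_subset _ _ hk),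
      Real.sign_of_neg (Finset.mem_filter.mp hk).2]
    simp
  have hnp : ‖∑ k ∈ Λp, B.e k‖ ≤ K * ‖z‖ := by rw [← hSp]; exact hp1
  have hnn : ‖∑ k ∈ Λn, B.e k‖ ≤ K * ‖z‖ := by
    have : ‖∑ k ∈ Λn, B.e k‖ = ‖B.S Λn z‖ := by rw [hSn, norm_neg]
    rw [this]; exact hp2
  have hunion : ∑ k ∈ Λ, B.e k = ∑ k ∈ Λp, B.e k + ∑ k ∈ Λn, B.e k := by
    have h7 : Λ.filter (fun k => ¬ 0 < B.coeff k x) = Λn := by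
      ext k
      simp only [hΛn, Finset.mem_filter, not_lt]
      constructor
      · rintro ⟨hk, h8⟩
        exact ⟨hk, lt_of_le_of_ne h8 (hne k hk)⟩
      · rintro ⟨hk, h8⟩
        exact ⟨hk, le_of_lt h8⟩
    rw [← h7, Finset.sum_filter_add_sum_filter_not]
  have hhl : B.hl Λ.card ≤ 2 * K * ‖z‖ := by
    calc B.hl Λ.card ≤ ‖∑ k ∈ Λ, B.e k‖ := B.hl_le Λ rfl
      _ ≤ ‖∑ k ∈ Λp, B.e k‖ + ‖∑ k ∈ Λn, B.e k‖ := by rw [hunion]; exact norm_add_le _ _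
      _ ≤ 2 * K * ‖z‖ := by linarith
  have hhlm : B.hl m ≤ 2 * K^2 * ‖z‖ := by
    calc B.hl m ≤ K * B.hl Λ.card := B.hl_qmono hK (le_trans hGc (Finset.card_le_card hGΛ))
      _ ≤ K * (2 * K * ‖z‖) := mul_le_mul_of_nonneg_left hhl (by linarith)
      _ = 2 * K^2 * ‖z‖ := by ring
  calc t * B.hl m ≤ t * (2 * K^2 * ‖z‖) := mul_le_mul_of_nonneg_left hhlm (le_of_lt ht)
    _ = 2 * K^2 * (t * ‖z‖) := by ring
    _ ≤ 2 * K^2 * (2 * (K * ‖x‖)) := by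
        refine mul_le_mul_of_nonneg_left ?_ (by nlinarith)
        exact htrunc
    _ = 4 * K^3 * ‖x‖ := by ring

/-- main finite estimate by dyadic blocks -/
lemma main_fin (x : X) (n : ℕ) : ∀ l : List ℕ, l.length = n → 1 ≤ n → l.Nodup →
    List.Pairwise (B.Desc x) l →
    ‖(l.map fun k => B.coeff k x • B.e k).sum‖ ≤
      2 * K^2 * ∑ j ∈ Finset.range (Nat.log 2 n + 1),
        B.hr (2^j) * |B.coeff (l.getD (2^j - 1) 0) x| := by
  have hKpos := B.hK0 hK
  have hK1' := B.hK1 hK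
  induction n using Nat.strong_induction_on with
  | _ n ih =>
    intro l hlen hn1 hnd hp
    set J := Nat.log 2 n with hJ
    have h2J : 2^J ≤ n := Nat.pow_log_le_self 2 (by omega)
    have hnlt : n < 2^(J+1) := Nat.lt_pow_succ_log_self (by norm_num) n
    have h2J1 : 1 ≤ 2^J := Nat.one_le_two_pow
    set l1 := l.take (2^J - 1) with hl1
    set l2 := l.drop (2^J - 1) with hl2
    have hl1len : l1.length = 2^J - 1 := by
      rw [hl1, List.length_take, hlen]; omega
    have hl2len : l2.length = n - (2^J - 1) := by
      rw [hl2, List.length_drop, hlen]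
    have happ : l = l1 ++ l2 := (List.take_append_drop _ l).symm
    have hsplit : ‖(l.map fun k => B.coeff k x • B.e k).sum‖ ≤
        ‖(l1.map fun k => B.coeff k x • B.e k).sum‖
          + ‖(l2.map fun k => B.coeff k x • B.e k).sum‖ := by
      have hsum : (l1.map fun k => B.coeff k x • B.e k).sum
          + (l2.map fun k => B.coeff k x • B.e k).sum
          = (l.map fun k => B.coeff k x • B.e k).sum := by
        rw [← List.sum_append, ← List.map_append, hl1, hl2, List.take_append_drop]
      rw [← hsum]
      exact norm_add_le _ _
    have hidx : 2^J - 1 < n := by omega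
    have hgetmem : ∀ i, i < n → l.getD i 0 ∈ l := by
      intro i hi
      rw [List.getD_eq_getElem l 0 (by omega : i < l.length)]
      exact List.getElem_mem _
    set s := |B.coeff (l.getD (2^J - 1) 0) x| with hs
    have hdesc : ∀ i j : ℕ, i ≤ j → j < n →
        |B.coeff (l.getD j 0) x| ≤ |B.coeff (l.getD i 0) x| := by
      intro i j hij hj
      rcases eq_or_lt_of_le hij with rfl | hlt
      · exact le_refl _
      · have hi : i < n := by omega
        have h2 := List.pairwise_iff_get.mp hp ⟨i, by omega⟩ ⟨j, by omega⟩ hlt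
        simp only [Desc] at h2
        rw [List.getD_eq_getElem l 0 (by omega : j < l.length),
          List.getD_eq_getElem l 0 (by omega : i < l.length)]
        simpa [List.get_eq_getElem] using h2
    -- bound for l2
    have hl2nd : l2.Nodup := hnd.sublist (List.drop_sublist _ _)
    have hl2p : List.Pairwise (B.Desc x) l2 := hp.sublist (List.drop_sublist _ _)
    have hs2 : ∀ k ∈ l2, |B.coeff k x| ≤ s := by
      intro k hk
      obtain ⟨⟨i, hi⟩, rfl⟩ := List.mem_iff_get.mp hk
      have hgi : l2.get ⟨i, hi⟩ = l.getD ((2^J - 1) + i) 0 := by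
        have h3 : (2^J - 1) + i < l.length := by
          rw [hlen]; rw [hl2len] at hi; omega
        have h4 := List.getElem_drop' h3
        rw [List.getD_eq_getElem l 0 h3]
        simpa [List.get_eq_getElem, hl2] using h4.symm
      rw [hgi]
      exact hdesc (2^J - 1) ((2^J - 1) + i) (by omega) (by rw [hl2len] at hi; omega)
    have hupper := B.upper_est hK x l2 hl2nd hl2p s hs2
    have hl2le : l2.length ≤ 2^J := by
      rw [hl2len]
      have : 2^(J+1) = 2 * 2^J := by ring
      omega
    have hrle : B.hr l2.length ≤ K * B.hr (2^J) := B.hr_qmono hK hl2le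
    have hsnn : 0 ≤ s := abs_nonneg _
    have hl2bound : ‖(l2.map fun k => B.coeff k x • B.e k).sum‖
        ≤ 2 * K^2 * (B.hr (2^J) * s) := by
      calc ‖(l2.map fun k => B.coeff k x • B.e k).sum‖
          ≤ s * (2 * (K * B.hr l2.length)) := hupper
        _ ≤ s * (2 * (K * (K * B.hr (2^J)))) := by
            refine mul_le_mul_of_nonneg_left ?_ hsnn
            have := mul_le_mul_of_nonneg_left hrle (le_of_lt hKpos)
            nlinarith
        _ = 2 * K^2 * (B.hr (2^J) * s) := by ring
    -- bound for l1
    have hl1bound : ‖(l1.map fun k => B.coeff k x • B.e k).sum‖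
        ≤ 2 * K^2 * ∑ j ∈ Finset.range J, B.hr (2^j) * |B.coeff (l.getD (2^j - 1) 0) x| := by
      rcases Nat.eq_zero_or_pos J with hJ0 | hJpos
      · rw [hJ0] at hl1len ⊢
        have : l1 = [] := List.length_eq_zero_iff.mp (by omega)
        rw [this]
        simp
      · have hn1' : 1 ≤ 2^J - 1 := by
          have : (2:ℕ)^1 ≤ 2^J := Nat.pow_le_pow_right (by norm_num) hJpos
          omega
        have hlog : Nat.log 2 (2^J - 1) = J - 1 := by
          refine Nat.log_eq_of_pow_le_of_lt_pow ?_ ?_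
          · have h4 : (2:ℕ)^(J-1) * 2 = 2^J := by
              rw [← pow_succ]
              congr 1
              omega
            omega
          · have h5 : J - 1 + 1 = J := by omega
            rw [h5]
            omega
        have hih := ih (2^J - 1) (by omega) l1 hl1len hn1'
          (hnd.sublist (List.take_sublist _ _)) (hp.sublist (List.take_sublist _ _))
        rw [hlog] at hih
        have hJ1 : J - 1 + 1 = J := by omega
        rw [hJ1] at hih
        refine le_trans hih ?_
        refine le_of_eq ?_
        congr 1
        refine Finset.sum_congr rfl fun j hj => ?_
        congr 2
        have hjJ : j < J := Finset.mem_range.mp hj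
        have hjlt : 2^j - 1 < 2^J - 1 := by
          have : (2:ℕ)^j < 2^J := Nat.pow_lt_pow_right (by norm_num) hjJ
          have h6 : 1 ≤ 2^j := Nat.one_le_two_pow
          omega
        have h7 : 2^j - 1 < l1.length := by rw [hl1len]; omega
        rw [List.getD_eq_getElem l1 0 h7,
          List.getD_eq_getElem l 0 (by rw [hlen]; omega)]
        simp [hl1, List.getElem_take]
    calc ‖(l.map fun k => B.coeff k x • B.e k).sum‖
        ≤ ‖(l1.map fun k => B.coeff k x • B.e k).sum‖
          + ‖(l2.map fun k => B.coeff k x • B.e k).sum‖ := hsplit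
      _ ≤ 2 * K^2 * ∑ j ∈ Finset.range J, B.hr (2^j) * |B.coeff (l.getD (2^j - 1) 0) x|
          + 2 * K^2 * (B.hr (2^J) * s) := add_le_add hl1bound hl2bound
      _ = 2 * K^2 * ∑ j ∈ Finset.range (J+1), B.hr (2^j) * |B.coeff (l.getD (2^j - 1) 0) x| := by
          rw [Finset.sum_range_succ]
          ring

/-- finite-support projection bound -/
lemma proj_fin (x : X) (A : Finset ℕ) (hA : ∀ k ∉ A, B.coeff k x = 0)
    (Γ : Finset ℕ) (hΓ : 1 ≤ Γ.card) :
    ‖B.S Γ x‖ ≤ (8 * K^5) *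
      (∑ j ∈ Finset.range (Nat.log 2 Γ.card + 1), B.mu (2^j)) * ‖x‖ := by
  classical
  have hKpos := B.hK0 hK
  have hK1' := B.hK1 hK
  set l := B.dsortL x Γ with hldef
  set N := Γ.card with hN
  have hllen : l.length = N := B.dsortL_length x Γ
  have hSeq : B.S Γ x = (l.map fun k => B.coeff k x • B.e k).sum := by
    have h1 : l.toFinset = Γ := by rw [hldef]; exact B.dsortL_toFinset x Γ
    have h2 : l.Nodup := by rw [hldef]; exact B.dsortL_nodup x Γ
    rw [S, ← h1, list_sum_toFinset l h2]
  have hmain := B.main_fin hK x N l hllen hΓ (B.dsortL_nodup x Γ) (B.dsortL_pairwise x Γ)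
  set J := Nat.log 2 N with hJ
  have h2J : 2^J ≤ N := Nat.pow_log_le_self 2 (by omega)
  have hdesc : ∀ i j : ℕ, i ≤ j → j < N →
      |B.coeff (l.getD j 0) x| ≤ |B.coeff (l.getD i 0) x| := by
    intro i j hij hj
    rcases eq_or_lt_of_le hij with rfl | hlt
    · exact le_refl _
    · have hlp : List.Pairwise (B.Desc x) l := B.dsortL_pairwise x Γ
      have h2 := List.pairwise_iff_get.mp hlp ⟨i, by omega⟩ ⟨j, by omega⟩ hlt
      simp only [Desc] at h2
      rw [List.getD_eq_getElem l 0 (by omega : j < l.length),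
        List.getD_eq_getElem l 0 (by omega : i < l.length)]
      simpa [List.get_eq_getElem, ← hldef] using h2
  have hterm : ∀ j ∈ Finset.range (J+1),
      B.hr (2^j) * |B.coeff (l.getD (2^j - 1) 0) x| ≤ B.mu (2^j) * (4 * K^3 * ‖x‖) := by
    intro j hj
    have hjJ : j < J + 1 := Finset.mem_range.mp hj
    have h2jN : 2^j ≤ N := le_trans (Nat.pow_le_pow_right (by norm_num) (by omega)) h2J
    have h2j1 : (1:ℕ) ≤ 2^j := Nat.one_le_two_pow
    set t := |B.coeff (l.getD (2^j - 1) 0) x| with ht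
    rcases eq_or_lt_of_le (abs_nonneg (B.coeff (l.getD (2^j - 1) 0) x)) with h0 | hpos
    · rw [ht, ← h0, mul_zero]
      have := B.mu_nonneg (N := 2^j) h2j1
      have := B.hK1 hK
      positivity
    · -- t > 0
      set Gs := (l.take (2^j)).toFinset with hGs
      have htknd : (l.take (2^j)).Nodup := (B.dsortL_nodup x Γ).sublist (List.take_sublist _ _)
      have hGcard : Gs.card = 2^j := by
        rw [hGs, List.toFinset_card_of_nodup htknd, List.length_take, hllen]
        omega
      have hGle : ∀ k ∈ Gs, t ≤ |B.coeff k x| := by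
        intro k hk
        rw [hGs, List.mem_toFinset] at hk
        obtain ⟨⟨i, hi⟩, rfl⟩ := List.mem_iff_get.mp hk
        have hilen : i < 2^j := by
          have : (l.take (2^j)).length = min (2^j) l.length := List.length_take
          omega
        have hgi : (l.take (2^j)).get ⟨i, hi⟩ = l.getD i 0 := by
          rw [List.getD_eq_getElem l 0 (by omega : i < l.length)]
          simp [List.getElem_take]
        rw [hgi]
        exact hdesc i (2^j - 1) (by omega) (by omega)
      have htb := B.tbound hK x A hA t hpos Gs hGle (2^j) (by rw [hGcard])
      have hhlpos : 0 < B.hl (2^j) := by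
        have h2K : (0:ℝ) < B.c_norm / (2 * K) := div_pos B.c_norm_pos (by linarith)
        exact lt_of_lt_of_le h2K (B.hl_pos hK h2j1)
      have htle : t ≤ 4 * K^3 * ‖x‖ / B.hl (2^j) := by
        rw [le_div_iff₀ hhlpos]
        linarith [htb]
      calc B.hr (2^j) * t ≤ B.hr (2^j) * (4 * K^3 * ‖x‖ / B.hl (2^j)) :=
            mul_le_mul_of_nonneg_left htle (B.hr_nonneg _)
        _ = (B.hr (2^j) / B.hl (2^j)) * (4 * K^3 * ‖x‖) := by
            rw [div_eq_mul_inv, div_eq_mul_inv]; ring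
        _ ≤ B.mu (2^j) * (4 * K^3 * ‖x‖) := by
            refine mul_le_mul_of_nonneg_right (B.ratio_le_mu h2j1 le_rfl) ?_
            have := norm_nonneg x
            nlinarith
  have hsum : ∑ j ∈ Finset.range (J+1), B.hr (2^j) * |B.coeff (l.getD (2^j - 1) 0) x|
      ≤ (∑ j ∈ Finset.range (J+1), B.mu (2^j)) * (4 * K^3 * ‖x‖) := by
    rw [Finset.sum_mul]
    exact Finset.sum_le_sum hterm
  calc ‖B.S Γ x‖ = ‖(l.map fun k => B.coeff k x • B.e k).sum‖ := by rw [hSeq]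
    _ ≤ 2 * K^2 * ∑ j ∈ Finset.range (J+1), B.hr (2^j) * |B.coeff (l.getD (2^j - 1) 0) x| :=
        hmain
    _ ≤ 2 * K^2 * ((∑ j ∈ Finset.range (J+1), B.mu (2^j)) * (4 * K^3 * ‖x‖)) := by
        refine mul_le_mul_of_nonneg_left hsum ?_
        nlinarith
    _ = (8 * K^5) * (∑ j ∈ Finset.range (J+1), B.mu (2^j)) * ‖x‖ := by ring

lemma mu_pow_le {j : ℕ} (hj : 1 ≤ j) :
    B.mu (2^j) ≤ (2*(K*(1+K))) * ∑ k ∈ Finset.Icc (2^(j-1)) (2^j - 1), B.mu k / (k:ℝ) := by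
  have hKpos := B.hK0 hK
  have hK1' := B.hK1 hK
  set a := 2^(j-1) with ha
  have ha1 : 1 ≤ a := Nat.one_le_two_pow
  have h2a : 2^j = 2*a := by
    rw [ha, ← pow_succ']
    congr 1
    omega
  have hdbl : B.mu (2^j) ≤ (K*(1+K)) * B.mu a := by
    rw [h2a]
    exact B.mu_double hK ha1
  have hterm : ∀ k ∈ Finset.Icc a (2*a - 1), B.mu a / (2*(a:ℝ)) ≤ B.mu k / (k:ℝ) := by
    intro k hk
    obtain ⟨hk1, hk2⟩ := Finset.mem_Icc.mp hk
    have hk0 : (0:ℝ) < (k:ℝ) := by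
      have : 1 ≤ k := le_trans ha1 hk1
      exact_mod_cast this
    have hka : (k:ℝ) ≤ 2*(a:ℝ) := by
      have : k ≤ 2*a := by omega
      exact_mod_cast this
    have hmua : B.mu a ≤ B.mu k := B.mu_mono ha1 hk1
    have h0 : 0 ≤ B.mu a := B.mu_nonneg ha1
    calc B.mu a / (2*(a:ℝ)) ≤ B.mu a / (k:ℝ) := by
          apply div_le_div_of_nonneg_left h0 hk0 hka
      _ ≤ B.mu k / (k:ℝ) := by gcongr
  have hcard : (Finset.Icc a (2*a - 1)).card = a := by
    rw [Nat.card_Icc]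
    omega
  have hsum : B.mu a / 2 ≤ ∑ k ∈ Finset.Icc a (2*a - 1), B.mu k / (k:ℝ) := by
    have h1 := Finset.card_nsmul_le_sum (Finset.Icc a (2*a-1))
      (fun k => B.mu k / (k:ℝ)) (B.mu a / (2*(a:ℝ))) hterm
    rw [hcard, nsmul_eq_mul] at h1
    have ha0 : (0:ℝ) < (a:ℝ) := by exact_mod_cast ha1
    have h2 : (a:ℝ) * (B.mu a / (2*(a:ℝ))) = B.mu a / 2 := by
      field_simp
    rw [h2] at h1
    exact h1
  have h3 : Finset.Icc a (2^j - 1) = Finset.Icc a (2*a - 1) := by rw [h2a]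
  rw [h3]
  have h0 : 0 ≤ B.mu a := B.mu_nonneg ha1
  calc B.mu (2^j) ≤ (K*(1+K)) * B.mu a := hdbl
    _ = (2*(K*(1+K))) * (B.mu a / 2) := by ring
    _ ≤ (2*(K*(1+K))) * ∑ k ∈ Finset.Icc a (2*a - 1), B.mu k / (k:ℝ) := by
        refine mul_le_mul_of_nonneg_left hsum ?_
        nlinarith

lemma sum_mu_dyadic (J N : ℕ) (h : 2^J ≤ N) :
    ∑ j ∈ Finset.range (J+1), B.mu (2^j)
      ≤ (4*(K*(1+K))) * ∑ k ∈ Finset.Icc 1 N, B.mu k / (k:ℝ) := by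
  have hKpos := B.hK0 hK
  have hK1' := B.hK1 hK
  have hD1 : (1:ℝ) ≤ 2*(K*(1+K)) := by nlinarith
  set D := K*(1+K) with hD
  have hmu1 : 0 ≤ B.mu 1 := B.mu_nonneg le_rfl
  have htermnn : ∀ k, 1 ≤ k → (0:ℝ) ≤ B.mu k / (k:ℝ) := by
    intro k hk
    have : (0:ℝ) ≤ (k:ℝ) := by positivity
    exact div_nonneg (B.mu_nonneg hk) this
  have key : ∀ J' : ℕ, ∑ j ∈ Finset.range (J'+1), B.mu (2^j)
      ≤ (2*D) * B.mu 1 + (2*D) * ∑ k ∈ Finset.Icc 1 (2^J' - 1), B.mu k / (k:ℝ) := by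
    intro J'
    induction J' with
    | zero =>
        have h1 : Finset.Icc 1 (2^0 - 1) = (∅ : Finset ℕ) := Finset.Icc_eq_empty (by omega)
        rw [h1]
        simp only [zero_add, Finset.sum_range_one, pow_zero, Finset.sum_empty, mul_zero, add_zero]
        nlinarith [mul_nonneg (by linarith : (0:ℝ) ≤ 2*D - 1) hmu1]
    | succ J' ihJ =>
        rw [Finset.sum_range_succ]
        have hstep := B.mu_pow_le hK (j := J'+1) (by omega)
        have hsimp : J' + 1 - 1 = J' := by omega
        rw [hsimp] at hstep
        have hjoin : ∑ k ∈ Finset.Icc 1 (2^J' - 1), B.mu k / (k:ℝ)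
            + ∑ k ∈ Finset.Icc (2^J') (2^(J'+1) - 1), B.mu k / (k:ℝ)
            = ∑ k ∈ Finset.Icc 1 (2^(J'+1) - 1), B.mu k / (k:ℝ) := by
          have e1 : Finset.Icc 1 (2^J' - 1) = Finset.Ioc 0 (2^J' - 1) := by
            rw [← Finset.Icc_add_one_left_eq_Ioc, zero_add]
          have h2a : (1:ℕ) ≤ 2^J' := Nat.one_le_two_pow
          have e2 : Finset.Icc (2^J') (2^(J'+1) - 1) = Finset.Ioc (2^J' - 1) (2^(J'+1) - 1) := by
            rw [← Finset.Icc_add_one_left_eq_Ioc]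
            congr 1
            omega
          have e3 : Finset.Icc 1 (2^(J'+1) - 1) = Finset.Ioc 0 (2^(J'+1) - 1) := by
            rw [← Finset.Icc_add_one_left_eq_Ioc, zero_add]
          rw [e1, e2, e3]
          refine Finset.sum_Ioc_consecutive _ (by omega) ?_
          have : 2^(J'+1) = 2*2^J' := by ring
          omega
        calc ∑ j ∈ Finset.range (J'+1), B.mu (2^j) + B.mu (2^(J'+1))
            ≤ ((2*D) * B.mu 1 + (2*D) * ∑ k ∈ Finset.Icc 1 (2^J' - 1), B.mu k / (k:ℝ))
              + (2*D) * ∑ k ∈ Finset.Icc (2^J') (2^(J'+1) - 1), B.mu k / (k:ℝ) :=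
              add_le_add ihJ hstep
          _ = (2*D) * B.mu 1 + (2*D) * (∑ k ∈ Finset.Icc 1 (2^J' - 1), B.mu k / (k:ℝ)
              + ∑ k ∈ Finset.Icc (2^J') (2^(J'+1) - 1), B.mu k / (k:ℝ)) := by ring
          _ = (2*D) * B.mu 1 + (2*D) * ∑ k ∈ Finset.Icc 1 (2^(J'+1) - 1), B.mu k / (k:ℝ) := by
              rw [hjoin]
  have hN1 : 1 ≤ N := le_trans Nat.one_le_two_pow h
  have hmu1le : B.mu 1 ≤ ∑ k ∈ Finset.Icc 1 N, B.mu k / (k:ℝ) := by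
    have h1 : B.mu 1 / ((1:ℕ):ℝ) ≤ ∑ k ∈ Finset.Icc 1 N, B.mu k / (k:ℝ) := by
      refine Finset.single_le_sum (fun k hk => htermnn k (Finset.mem_Icc.mp hk).1) ?_
      rw [Finset.mem_Icc]
      omega
    simpa using h1
  have hsub : ∑ k ∈ Finset.Icc 1 (2^J - 1), B.mu k / (k:ℝ)
      ≤ ∑ k ∈ Finset.Icc 1 N, B.mu k / (k:ℝ) := by
    refine Finset.sum_le_sum_of_subset_of_nonneg ?_
      (fun k hk _ => htermnn k (Finset.mem_Icc.mp hk).1)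
    refine Finset.Icc_subset_Icc le_rfl ?_
    omega
  have hD0 : (0:ℝ) ≤ 2*D := by nlinarith
  calc ∑ j ∈ Finset.range (J+1), B.mu (2^j)
      ≤ (2*D) * B.mu 1 + (2*D) * ∑ k ∈ Finset.Icc 1 (2^J - 1), B.mu k / (k:ℝ) := key J
    _ ≤ (2*D) * ∑ k ∈ Finset.Icc 1 N, B.mu k / (k:ℝ)
        + (2*D) * ∑ k ∈ Finset.Icc 1 N, B.mu k / (k:ℝ) :=
        add_le_add (mul_le_mul_of_nonneg_left hmu1le hD0)
          (mul_le_mul_of_nonneg_left hsub hD0)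
    _ = (4*D) * ∑ k ∈ Finset.Icc 1 N, B.mu k / (k:ℝ) := by ring

end QGBasis



/-- bound for coordinate projections (Lemma 2.3),
`‖S_Γ(x)‖ ≲ 8K⁴ (∑_{k=1}^{|Γ|} μ(k)/k) ‖x‖` with implicit constant
independent of `Γ` and `x`. -/
theorem stmt3 {X : Type*} [NormedAddCommGroup X] [NormedSpace ℝ X] [CompleteSpace X]
    (B : QGBasis X) (K : ℝ) (hK : B.QuasiGreedyWith K) :
    ∃ C : ℝ, 0 < C ∧ ∀ (Γ : Finset ℕ) (x : X),
      ‖B.S Γ x‖ ≤ C * (8 * K ^ 4) *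
        (∑ k ∈ Finset.Icc 1 Γ.card, B.mu k / (k : ℝ)) * ‖x‖ := by
  classical
  have hKpos := B.hK0 hK
  have hK1' := B.hK1 hK
  set C₂ : ℝ := (8*K^5) * (4*(K*(1+K))) with hC₂
  have hC₂0 : 0 ≤ C₂ := by
    rw [hC₂]
    have h6 : (0:ℝ) < K^6 := pow_pos hKpos 6
    have h7 : (0:ℝ) < K^7 := pow_pos hKpos 7
    nlinarith
  refine ⟨max (C₂/8) 1, lt_of_lt_of_le one_pos (le_max_right _ _), fun Γ x => ?_⟩
  have htermnn : ∀ k, 1 ≤ k → (0:ℝ) ≤ B.mu k / (k:ℝ) := by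
    intro k hk
    have : (0:ℝ) ≤ (k:ℝ) := by positivity
    exact div_nonneg (B.mu_nonneg hk) this
  rcases Nat.eq_zero_or_pos Γ.card with h0 | hN1
  · have hΓ : Γ = ∅ := Finset.card_eq_zero.mp h0
    subst hΓ
    have hIcc0 : Finset.Icc 1 (Finset.card (∅ : Finset ℕ)) = (∅ : Finset ℕ) := by
      rw [Finset.card_empty]
      exact Finset.Icc_eq_empty (by omega)
    rw [hIcc0]
    simp [QGBasis.S]
  · -- main case
    set N := Γ.card with hN
    have hfN0 : 0 ≤ ∑ k ∈ Finset.Icc 1 N, B.mu k / (k:ℝ) :=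
      Finset.sum_nonneg (fun k hk => htermnn k (Finset.mem_Icc.mp hk).1)
    set fN := ∑ k ∈ Finset.Icc 1 N, B.mu k / (k:ℝ) with hfN
    have key : ∀ M, (∀ k ∈ Γ, k < M) → ‖B.S Γ x‖
        ≤ C₂ * fN * ‖∑ j ∈ Finset.range M, B.coeff j x • B.e j‖ := by
      intro M hM
      set y := ∑ j ∈ Finset.range M, B.coeff j x • B.e j with hy
      have hA : ∀ j ∉ Finset.range M, B.coeff j y = 0 := by
        intro j hj
        rw [hy, B.aux_coeff_S, if_neg hj]
      have hcy : ∀ k ∈ Γ, B.coeff k y = B.coeff k x := by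
        intro k hk
        rw [hy, B.aux_coeff_S, if_pos (Finset.mem_range.mpr (hM k hk))]
      have hSeq : B.S Γ x = B.S Γ y := by
        rw [QGBasis.S, QGBasis.S]
        exact Finset.sum_congr rfl fun k hk => by rw [hcy k hk]
      have hproj := B.proj_fin hK y (Finset.range M) hA Γ (by rw [← hN]; omega)
      set J := Nat.log 2 N with hJ
      have h2J : 2^J ≤ N := Nat.pow_log_le_self 2 (by omega)
      have hdya := B.sum_mu_dyadic hK J N h2J
      have hsumnn : 0 ≤ ∑ j ∈ Finset.range (J+1), B.mu (2^j) :=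
        Finset.sum_nonneg fun j _ => B.mu_nonneg Nat.one_le_two_pow
      calc ‖B.S Γ x‖ = ‖B.S Γ y‖ := by rw [hSeq]
        _ ≤ (8*K^5) * (∑ j ∈ Finset.range (Nat.log 2 Γ.card + 1), B.mu (2^j)) * ‖y‖ := hproj
        _ = (8*K^5) * (∑ j ∈ Finset.range (J+1), B.mu (2^j)) * ‖y‖ := by rw [← hN, ← hJ]
        _ ≤ (8*K^5) * ((4*(K*(1+K))) * fN) * ‖y‖ := by
            refine mul_le_mul_of_nonneg_right ?_ (norm_nonneg _)
            refine mul_le_mul_of_nonneg_left ?_ (by nlinarith [pow_pos hKpos 5])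
            exact hdya
        _ = C₂ * fN * ‖y‖ := by rw [hC₂]; ring
    have htend : Tendsto (fun M => C₂ * fN * ‖∑ j ∈ Finset.range M, B.coeff j x • B.e j‖)
        atTop (nhds (C₂ * fN * ‖x‖)) := ((B.expansion x).norm).const_mul _
    have hbound : ‖B.S Γ x‖ ≤ C₂ * fN * ‖x‖ := by
      refine ge_of_tendsto htend ?_
      filter_upwards [eventually_ge_atTop ((Γ.sup id) + 1)] with M hM
      refine key M fun k hk => ?_
      have : k ≤ Γ.sup id := Finset.le_sup (f := id) hk
      omega
    have hC8 : C₂ ≤ (max (C₂/8) 1) * (8 * K^4) := by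
      have h1 : C₂/8 ≤ max (C₂/8) 1 := le_max_left _ _
      have h2 : (0:ℝ) ≤ 8 * K^4 := by positivity
      have h3 : (C₂/8) * (8*K^4) ≤ (max (C₂/8) 1) * (8*K^4) :=
        mul_le_mul_of_nonneg_right h1 h2
      have h4 : (C₂/8) * (8*K^4) = C₂ * K^4 := by ring
      have h5 : (1:ℝ) ≤ K^4 := one_le_pow₀ hK1'
      nlinarith
    calc ‖B.S Γ x‖ ≤ C₂ * fN * ‖x‖ := hbound
      _ = C₂ * (fN * ‖x‖) := by ring
      _ ≤ ((max (C₂/8) 1) * (8 * K^4)) * (fN * ‖x‖) := by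
          refine mul_le_mul_of_nonneg_right hC8 ?_
          exact mul_nonneg hfN0 (norm_nonneg _)
      _ = (max (C₂/8) 1) * (8 * K^4) * fN * ‖x‖ := by ring
end
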